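/- arXiv:2201.02502 — 2 statements merged into one kernel-verified Lean document; each statement's English description precedes it below -/
import Mathlib

section
/- Let Γ be an edge-separated CLTTF graph on V. Then the chunk graph Ch_Γ is a tree, and every leaf (vertex of degree one) of Ch_Γ is a chunk of Γ; hence Ch_Γ is called the chunk tree of Γ. -/
open scoped Classical

namespace CLTTF

structure LGraph (V : Type) where
  edges : Set (Sym2 V)
  label : Sym2 V → ℤ

variable {V : Type} [Fintype V] [DecidableEq V]

def LGraph.Good (G : LGraph V) : Prop :=
  (∀ e ∈ G.edges, ¬ e.IsDiag) ∧ ∀ e, e ∉ G.edges → G.label e = 0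

def LGraph.toSimple (G : LGraph V) : SimpleGraph V where
  Adj u v := u ≠ v ∧ s(u, v) ∈ G.edges
  symm := by
    constructor
    intro u v h
    exact ⟨h.1.symm, by rw [Sym2.eq_swap]; exact h.2⟩
  loopless := by
    constructor
    intro v h
    exact h.1 rfl

structure IsCLTTF (G : LGraph V) : Prop where
  good : G.Good
  connected : G.toSimple.Connected
  large : ∀ e ∈ G.edges, 3 ≤ G.label e
  triangle_free : G.toSimple.CliqueFree 3

structure IsDecomp (G : LGraph V) (S₀ S₁ S₂ : Set V) : Prop where
  union_eq : S₁ ∪ S₂ = Set.univ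
  inter_eq : S₁ ∩ S₂ = S₀
  ne₁ : S₁ ≠ S₀
  ne₂ : S₂ ≠ S₀
  edge_cond : ∀ e ∈ G.edges, (∀ v ∈ e, v ∈ S₁) ∨ (∀ v ∈ e, v ∈ S₂)

def IsSepEdge (G : LGraph V) (e : Sym2 V) : Prop :=
  e ∈ G.edges ∧ ∃ S₁ S₂ : Set V, IsDecomp G {v | v ∈ e} S₁ S₂

def HasSepVertex (G : LGraph V) : Prop :=
  ∃ (v : V) (S₁ S₂ : Set V), IsDecomp G {v} S₁ S₂

def EdgeSeparated (G : LGraph V) : Prop := ¬ HasSepVertex G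

def ConnFull (G : LGraph V) (S : Set V) : Prop :=
  ((G.toSimple).induce S).Connected

def Indecomposable (G : LGraph V) (S : Set V) : Prop :=
  ∀ e ∈ G.edges, ∀ S₁ S₂ : Set V, IsDecomp G {v | v ∈ e} S₁ S₂ → S ⊆ S₁ ∨ S ⊆ S₂

def IsChunk (G : LGraph V) (S : Set V) : Prop :=
  ConnFull G S ∧ Indecomposable G S ∧
    ∀ T : Set V, ConnFull G T → Indecomposable G T → S ⊆ T → S = T

abbrev ChunkVert (G : LGraph V) : Type :=
  {S : Set V // IsChunk G S} ⊕ {e : Sym2 V // IsSepEdge G e}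

def chunkGraph (G : LGraph V) : SimpleGraph (ChunkVert G) where
  Adj x y :=
    (∃ C e, x = Sum.inl C ∧ y = Sum.inr e ∧ {v | v ∈ e.1} ⊆ C.1) ∨
    (∃ C e, x = Sum.inr e ∧ y = Sum.inl C ∧ {v | v ∈ e.1} ⊆ C.1)
  symm := by
    constructor
    rintro x y (⟨C, e, rfl, rfl, h⟩ | ⟨C, e, rfl, rfl, h⟩)
    · exact Or.inr ⟨C, e, rfl, rfl, h⟩
    · exact Or.inl ⟨C, e, rfl, rfl, h⟩
  loopless := by
    constructor
    rintro x (⟨C, e, rfl, h, -⟩ | ⟨C, e, rfl, h, -⟩) <;> exact absurd h (by simp)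

def IsCenter (G : LGraph V) (x : ChunkVert G) : Prop :=
  ∀ y : ChunkVert G, 2 * (chunkGraph G).dist x y ≤ (chunkGraph G).diam

def LGraph.map (a : Equiv.Perm V) (G : LGraph V) : LGraph V :=
  ⟨Sym2.map a '' G.edges, fun f => G.label (Sym2.map a.symm f)⟩

noncomputable def twMap (s t : V) (S₂ : Set V) (f : Sym2 V) : Sym2 V :=
  if h : ∃ v, v ∈ S₂ ∧ v ≠ s ∧ v ≠ t ∧ f = s(v, s) then s(h.choose, t)
  else if h' : ∃ v, v ∈ S₂ ∧ v ≠ s ∧ v ≠ t ∧ f = s(v, t) then s(h'.choose, s)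
  else f

noncomputable def LGraph.twist (G : LGraph V) (s t : V) (S₂ : Set V) : LGraph V :=
  if Even (G.label s(s, t)) then G
  else ⟨twMap s t S₂ '' G.edges, fun f => G.label (twMap s t S₂ f)⟩

noncomputable def twistEdgeMap (G : LGraph V) (s t : V) (S₂ : Set V) : Sym2 V → Sym2 V :=
  if Even (G.label s(s, t)) then id else twMap s t S₂

def TwistStep (G Δ : LGraph V) : Prop :=
  ∃ (s t : V) (S₁ S₂ : Set V),
    s(s, t) ∈ G.edges ∧ IsDecomp G {s, t} S₁ S₂ ∧ Δ = G.twist s t S₂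

def TwistEquiv (G Δ : LGraph V) : Prop := Relation.ReflTransGen TwistStep G Δ

def side1 (G : LGraph V) (e : Sym2 V) (C : Set V) : Set V :=
  {v | ∃ (he : IsSepEdge G e) (hC : IsChunk G C) (D : Set V) (hD : IsChunk G D),
    v ∈ D ∧
    ((chunkGraph G).deleteEdges
      {s((Sum.inr ⟨e, he⟩ : ChunkVert G), Sum.inl ⟨C, hC⟩)}).Reachable
      (Sum.inr ⟨e, he⟩) (Sum.inl ⟨D, hD⟩)}

def side2 (G : LGraph V) (e : Sym2 V) (C : Set V) : Set V :=
  {v | ∃ (he : IsSepEdge G e) (hC : IsChunk G C) (D : Set V) (hD : IsChunk G D),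
    v ∈ D ∧
    ((chunkGraph G).deleteEdges
      {s((Sum.inr ⟨e, he⟩ : ChunkVert G), Sum.inl ⟨C, hC⟩)}).Reachable
      (Sum.inl ⟨C, hC⟩) (Sum.inl ⟨D, hD⟩)}

noncomputable def pt1 (e : Sym2 V) : V := (Quot.out e).1
noncomputable def pt2 (e : Sym2 V) : V := (Quot.out e).2

noncomputable def twistCh (G : LGraph V) (e : Sym2 V) (C : Set V) : LGraph V :=
  G.twist (pt1 e) (pt2 e) (side2 G e C)

def IsOutward (G : LGraph V) (e : Sym2 V) (C : Set V) : Prop :=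
  ∃ (he : IsSepEdge G e) (hC : IsChunk G C),
    {v | v ∈ e} ⊆ C ∧
    ∀ x : ChunkVert G, IsCenter G x →
      (chunkGraph G).dist x (Sum.inr ⟨e, he⟩) < (chunkGraph G).dist x (Sum.inl ⟨C, hC⟩)

noncomputable def applyTwists (G : LGraph V) (l : List (Sym2 V × Set V)) : LGraph V :=
  l.foldl (fun H p => twistCh H p.1 p.2) G

def Rigid (G : LGraph V) : Prop :=
  ∀ Δ : LGraph V, TwistEquiv G Δ → ∃ a : Equiv.Perm V, LGraph.map a G = Δ

def DiscretelyRigid (G : LGraph V) : Prop :=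
  ∀ Δ : LGraph V, TwistEquiv G Δ → (∃ a : Equiv.Perm V, LGraph.map a G = Δ) → Δ = G

def IsoSet (G : LGraph V) : Set (Equiv.Perm V) :=
  {a | TwistEquiv G (LGraph.map a G)}

end CLTTF

namespace CLTTF

variable {V : Type} [Fintype V] [DecidableEq V]

def altProd {M : Type} [Monoid M] : M → M → ℕ → M
  | _, _, 0 => 1
  | a, b, n + 1 => a * altProd b a n

def artinRels (G : LGraph V) : Set (FreeGroup V) :=
  {r | ∃ u w : V, s(u, w) ∈ G.edges ∧
    r = altProd (FreeGroup.of u) (FreeGroup.of w) (G.label s(u, w)).toNat *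
        (altProd (FreeGroup.of w) (FreeGroup.of u) (G.label s(u, w)).toNat)⁻¹}

abbrev ArtinGroup (G : LGraph V) : Type := PresentedGroup (artinRels G)

def agen (G : LGraph V) (v : V) : ArtinGroup G := PresentedGroup.of v

noncomputable def xe (G : LGraph V) (e : Sym2 V) : ArtinGroup G :=
  altProd (agen G (pt1 e)) (agen G (pt2 e)) (G.label e).toNat

def PermHomSpec (G Δ : LGraph V) (a : Equiv.Perm V)
    (φ : ArtinGroup G →* ArtinGroup Δ) : Prop :=
  ∀ v : V, φ (agen G v) = agen Δ (a v)

def PConjSpec (G Δ : LGraph V) (e : Sym2 V) (S₁ : Set V)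
    (φ : ArtinGroup G →* ArtinGroup Δ) : Prop :=
  ∀ v : V, (v ∈ S₁ → φ (agen G v) = agen Δ v) ∧
    (v ∉ S₁ → φ (agen G v) = (xe Δ e)⁻¹ * agen Δ v * xe Δ e)

inductive ChainPC (G : LGraph V) : ∀ Δ : LGraph V, (ArtinGroup G →* ArtinGroup Δ) → Prop
  | nil : ChainPC G G (MonoidHom.id (ArtinGroup G))
  | fwd {Δ : LGraph V} {φ : ArtinGroup G →* ArtinGroup Δ} (e : Sym2 V) (C : Set V)
      (f : ArtinGroup Δ →* ArtinGroup (twistCh Δ e C)) :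
      ChainPC G Δ φ → IsOutward Δ e C →
      PConjSpec Δ (twistCh Δ e C) e (side1 Δ e C) f →
      ChainPC G (twistCh Δ e C) (f.comp φ)
  | bwd (Λ : LGraph V) (e : Sym2 V) (C : Set V)
      {φ : ArtinGroup G →* ArtinGroup (twistCh Λ e C)}
      (f : ArtinGroup Λ →* ArtinGroup (twistCh Λ e C))
      (g : ArtinGroup (twistCh Λ e C) →* ArtinGroup Λ) :
      ChainPC G (twistCh Λ e C) φ → IsOutward Λ e C →
      PConjSpec Λ (twistCh Λ e C) e (side1 Λ e C) f →
      g.comp f = MonoidHom.id (ArtinGroup Λ) →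
      f.comp g = MonoidHom.id (ArtinGroup (twistCh Λ e C)) →
      ChainPC G Λ (g.comp φ)

inductive ChainA (G : LGraph V) : ∀ Δ : LGraph V, (ArtinGroup G →* ArtinGroup Δ) → Prop
  | nil : ChainA G G (MonoidHom.id (ArtinGroup G))
  | fwd {Δ : LGraph V} {φ : ArtinGroup G →* ArtinGroup Δ} (e : Sym2 V) (C : Set V)
      (f : ArtinGroup Δ →* ArtinGroup (twistCh Δ e C)) :
      ChainA G Δ φ → IsOutward Δ e C →
      PConjSpec Δ (twistCh Δ e C) e (side1 Δ e C) f →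
      ChainA G (twistCh Δ e C) (f.comp φ)
  | bwd (Λ : LGraph V) (e : Sym2 V) (C : Set V)
      {φ : ArtinGroup G →* ArtinGroup (twistCh Λ e C)}
      (f : ArtinGroup Λ →* ArtinGroup (twistCh Λ e C))
      (g : ArtinGroup (twistCh Λ e C) →* ArtinGroup Λ) :
      ChainA G (twistCh Λ e C) φ → IsOutward Λ e C →
      PConjSpec Λ (twistCh Λ e C) e (side1 Λ e C) f →
      g.comp f = MonoidHom.id (ArtinGroup Λ) →
      f.comp g = MonoidHom.id (ArtinGroup (twistCh Λ e C)) →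
      ChainA G Λ (g.comp φ)
  | iso {Δ : LGraph V} {φ : ArtinGroup G →* ArtinGroup Δ} (a : Equiv.Perm V)
      (f : ArtinGroup Δ →* ArtinGroup (LGraph.map a Δ)) :
      ChainA G Δ φ → PermHomSpec Δ (LGraph.map a Δ) a f →
      ChainA G (LGraph.map a Δ) (f.comp φ)

inductive ChainFull (G : LGraph V) : ∀ Δ : LGraph V, (ArtinGroup G →* ArtinGroup Δ) → Prop
  | nil : ChainFull G G (MonoidHom.id (ArtinGroup G))
  | fwd {Δ : LGraph V} {φ : ArtinGroup G →* ArtinGroup Δ} (e : Sym2 V) (C : Set V)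
      (f : ArtinGroup Δ →* ArtinGroup (twistCh Δ e C)) :
      ChainFull G Δ φ → IsOutward Δ e C →
      PConjSpec Δ (twistCh Δ e C) e (side1 Δ e C) f →
      ChainFull G (twistCh Δ e C) (f.comp φ)
  | bwd (Λ : LGraph V) (e : Sym2 V) (C : Set V)
      {φ : ArtinGroup G →* ArtinGroup (twistCh Λ e C)}
      (f : ArtinGroup Λ →* ArtinGroup (twistCh Λ e C))
      (g : ArtinGroup (twistCh Λ e C) →* ArtinGroup Λ) :
      ChainFull G (twistCh Λ e C) φ → IsOutward Λ e C →
      PConjSpec Λ (twistCh Λ e C) e (side1 Λ e C) f →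
      g.comp f = MonoidHom.id (ArtinGroup Λ) →
      f.comp g = MonoidHom.id (ArtinGroup (twistCh Λ e C)) →
      ChainFull G Λ (g.comp φ)
  | iso {Δ : LGraph V} {φ : ArtinGroup G →* ArtinGroup Δ} (a : Equiv.Perm V)
      (f : ArtinGroup Δ →* ArtinGroup (LGraph.map a Δ)) :
      ChainFull G Δ φ → PermHomSpec Δ (LGraph.map a Δ) a f →
      ChainFull G (LGraph.map a Δ) (f.comp φ)
  | inn {Δ : LGraph V} {φ : ArtinGroup G →* ArtinGroup Δ} (g : ArtinGroup Δ) :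
      ChainFull G Δ φ → ChainFull G Δ ((MulAut.conj g).toMonoidHom.comp φ)

inductive ChainPCc (G : LGraph V) :
    ∀ Δ : LGraph V, (ArtinGroup G →* ArtinGroup Δ) → ((Sym2 V × Set V) → ℤ) → Prop
  | nil : ChainPCc G G (MonoidHom.id (ArtinGroup G)) (fun _ => 0)
  | fwd {Δ : LGraph V} {φ : ArtinGroup G →* ArtinGroup Δ} {c : (Sym2 V × Set V) → ℤ}
      (e : Sym2 V) (C : Set V)
      (f : ArtinGroup Δ →* ArtinGroup (twistCh Δ e C)) :
      ChainPCc G Δ φ c → IsOutward Δ e C →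
      PConjSpec Δ (twistCh Δ e C) e (side1 Δ e C) f →
      ChainPCc G (twistCh Δ e C) (f.comp φ) (fun p => c p + if p = (e, C) then 1 else 0)
  | bwd (Λ : LGraph V) (e : Sym2 V) (C : Set V)
      {φ : ArtinGroup G →* ArtinGroup (twistCh Λ e C)} {c : (Sym2 V × Set V) → ℤ}
      (f : ArtinGroup Λ →* ArtinGroup (twistCh Λ e C))
      (g : ArtinGroup (twistCh Λ e C) →* ArtinGroup Λ) :
      ChainPCc G (twistCh Λ e C) φ c → IsOutward Λ e C →
      PConjSpec Λ (twistCh Λ e C) e (side1 Λ e C) f →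
      g.comp f = MonoidHom.id (ArtinGroup Λ) →
      f.comp g = MonoidHom.id (ArtinGroup (twistCh Λ e C)) →
      ChainPCc G Λ (g.comp φ) (fun p => c p - if p = (e, C) then 1 else 0)

def InnA (G : LGraph V) : Subgroup (MulAut (ArtinGroup G)) :=
  (MulAut.conj : ArtinGroup G →* MulAut (ArtinGroup G)).range

instance innA_normal (G : LGraph V) : (InnA G).Normal := by
  constructor
  rintro n ⟨x, rfl⟩ g
  refine ⟨g x, ?_⟩
  ext y
  simp [MulAut.conj_apply, mul_assoc, MulAut.mul_apply]

def PositiveAut (G : LGraph V) (F : MulAut (ArtinGroup G)) : Prop :=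
  ∀ v : V, ∃ w : V,
    Abelianization.of (F (agen G v)) = Abelianization.of (agen G w)

def ZSet (G : LGraph V) : Set (MulAut (ArtinGroup G)) :=
  {F | (F = 1 ∧ ∃ (C : Set V) (hC : IsChunk G C), IsCenter G (Sum.inl ⟨C, hC⟩)) ∨
       (∃ (e : Sym2 V) (he : IsSepEdge G e), IsCenter G (Sum.inr ⟨e, he⟩) ∧
         ∃ k : ℤ, F = (MulAut.conj (xe G e)) ^ k)}

end CLTTF

namespace CLTTF

variable {V : Type} [Fintype V] [DecidableEq V]

noncomputable def xeF (G : LGraph V) (e : Sym2 V) : FreeGroup V :=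
  altProd (FreeGroup.of (pt1 e)) (FreeGroup.of (pt2 e)) (G.label e).toNat

noncomputable def pconjWord (G : LGraph V) (e : Sym2 V) (C : Set V) :
    FreeGroup V →* FreeGroup V :=
  FreeGroup.lift fun v =>
    if v ∈ side1 G e C then FreeGroup.of v
    else (xeF G e)⁻¹ * FreeGroup.of v * xeF G e

noncomputable def applyPConjs (G : LGraph V) (l : List (Sym2 V × Set V))
    (w : FreeGroup V) : FreeGroup V :=
  l.foldr (fun p acc => pconjWord G p.1 p.2 acc) w

def oddOutSet (G : LGraph V) : Set (Sym2 V × Set V) :=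
  {p | IsOutward G p.1 p.2 ∧ Odd (G.label p.1)}

noncomputable def etaFinset (G : LGraph V) (a : Equiv.Perm V) :
    Finset (Sym2 V × Set V) :=
  if h : ∃ s : Finset (Sym2 V × Set V),
      (∀ p ∈ s, p ∈ oddOutSet G) ∧ applyTwists G s.toList = LGraph.map a G
  then h.choose else ∅

noncomputable def alphaActWord (G : LGraph V) (a : Equiv.Perm V) (v : V) : FreeGroup V :=
  applyPConjs G (etaFinset G a).toList (FreeGroup.of (a v))

abbrev OutEven (G : LGraph V) : Type :=
  {p : Sym2 V × Set V // IsOutward G p.1 p.2 ∧ Even (G.label p.1)}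

abbrev OutOdd (G : LGraph V) : Type :=
  {p : Sym2 V × Set V // IsOutward G p.1 p.2 ∧ Odd (G.label p.1)}

abbrev IsoPerm (G : LGraph V) : Type :=
  {a : Equiv.Perm V // TwistEquiv G (LGraph.map a G)}

abbrev GenO (G : LGraph V) : Type := (OutEven G ⊕ OutOdd G) ⊕ (IsoPerm G ⊕ Unit)

abbrev GenA (G : LGraph V) : Type := V ⊕ GenO G

noncomputable def genActWord (G : LGraph V) : GenO G → V → FreeGroup V
  | Sum.inl (Sum.inl p), v => pconjWord G p.1.1 p.1.2 (FreeGroup.of v)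
  | Sum.inl (Sum.inr p), v => pconjWord G p.1.1 p.1.2 (pconjWord G p.1.1 p.1.2 (FreeGroup.of v))
  | Sum.inr (Sum.inl a), v => alphaActWord G a.1 v
  | Sum.inr (Sum.inr _), v => (FreeGroup.of v)⁻¹

def EpsGenWords (G : LGraph V) : Set (FreeGroup (GenO G)) :=
  {w | (∃ p : OutEven G, w = FreeGroup.of (Sum.inl (Sum.inl p))) ∨
       (∃ p : OutOdd G, w = FreeGroup.of (Sum.inl (Sum.inr p)))}

noncomputable def wEps (G : LGraph V) (p : Sym2 V × Set V) : FreeGroup (GenO G) :=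
  if h : IsOutward G p.1 p.2 ∧ Even (G.label p.1) then
    FreeGroup.of (Sum.inl (Sum.inl ⟨p, h⟩)) else 1

noncomputable def wEps2 (G : LGraph V) (p : Sym2 V × Set V) : FreeGroup (GenO G) :=
  if h : IsOutward G p.1 p.2 ∧ Odd (G.label p.1) then
    FreeGroup.of (Sum.inl (Sum.inr ⟨p, h⟩)) else 1

noncomputable def wAlpha (G : LGraph V) (a : Equiv.Perm V) : FreeGroup (GenO G) :=
  if h : TwistEquiv G (LGraph.map a G) then
    FreeGroup.of (Sum.inr (Sum.inl ⟨a, h⟩)) else 1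

def wIota (G : LGraph V) : FreeGroup (GenO G) := FreeGroup.of (Sum.inr (Sum.inr ()))

def R1 (G : LGraph V) : Set (FreeGroup (GenO G)) :=
  {r | ∃ w ∈ EpsGenWords G, ∃ w' ∈ EpsGenWords G, r = w * w' * w⁻¹ * w'⁻¹}

def R2 (G : LGraph V) : Set (FreeGroup (GenO G)) :=
  {r | ∃ (a : IsoPerm G) (p : OutEven G),
    r = FreeGroup.of (Sum.inr (Sum.inl a)) * FreeGroup.of (Sum.inl (Sum.inl p)) *
        (FreeGroup.of (Sum.inr (Sum.inl a)))⁻¹ *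
        (wEps G (Sym2.map a.1 p.1.1, a.1 '' p.1.2))⁻¹} ∪
  {r | ∃ (a : IsoPerm G) (p : OutOdd G),
    r = FreeGroup.of (Sum.inr (Sum.inl a)) * FreeGroup.of (Sum.inl (Sum.inr p)) *
        (FreeGroup.of (Sum.inr (Sum.inl a)))⁻¹ *
        (wEps2 G (Sym2.map a.1 p.1.1, a.1 '' p.1.2))⁻¹}

noncomputable def pairWord (G : LGraph V) (a b : Equiv.Perm V) : FreeGroup (GenO G) :=
  (((etaFinset G a ∩ etaFinset G b).toList).map (wEps2 G)).prod

def R3 (G : LGraph V) : Set (FreeGroup (GenO G)) :=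
  {r | ∃ a b : IsoPerm G,
    r = wAlpha G a.1 * wAlpha G b.1 * (pairWord G a.1 b.1 * wAlpha G (a.1 * b.1))⁻¹}

noncomputable def EalphaSq (G : LGraph V) (a : Equiv.Perm V) : FreeGroup (GenO G) :=
  ((etaFinset G a).toList.map (wEps2 G)).prod

def R4 (G : LGraph V) : Set (FreeGroup (GenO G)) :=
  {wIota G * wIota G} ∪
  {r | ∃ a : IsoPerm G,
    r = wAlpha G a.1 * wIota G * (EalphaSq G a.1 * wIota G * wAlpha G a.1)⁻¹} ∪
  {r | ∃ w ∈ EpsGenWords G, r = w * wIota G * w * wIota G}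

noncomputable def centerEWord (G : LGraph V) (e : Sym2 V) : FreeGroup (GenO G) :=
  ((Set.toFinite {C : Set V | IsChunk G C ∧ {v | v ∈ e} ⊆ C}).toFinset.toList.map
    (fun C => wEps G (e, C))).prod

def RPhi (G : LGraph V) : Set (FreeGroup (GenO G)) :=
  {r | ∃ (e : Sym2 V) (he : IsSepEdge G e), IsCenter G (Sum.inr ⟨e, he⟩) ∧
    ((Even (G.label e) ∧ r = centerEWord G e) ∨
     (Odd (G.label e) ∧ r = wAlpha G (Equiv.swap (pt1 e) (pt2 e))))}

def ROut (G : LGraph V) : Set (FreeGroup (GenO G)) :=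
  R1 G ∪ R2 G ∪ R3 G ∪ R4 G ∪ RPhi G

def embO (G : LGraph V) : FreeGroup (GenO G) →* FreeGroup (GenA G) :=
  FreeGroup.map Sum.inr

def embV (G : LGraph V) : FreeGroup V →* FreeGroup (GenA G) :=
  FreeGroup.map Sum.inl

def R0 (G : LGraph V) : Set (FreeGroup (GenA G)) :=
  (embV G '' artinRels G) ∪
  {r | ∃ (g : GenO G) (v : V),
    r = FreeGroup.of (Sum.inr g) * FreeGroup.of (Sum.inl v) *
        (FreeGroup.of (Sum.inr g))⁻¹ * (embV G (genActWord G g v))⁻¹}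

def RtPhi (G : LGraph V) : Set (FreeGroup (GenA G)) :=
  {r | ∃ (e : Sym2 V) (he : IsSepEdge G e), IsCenter G (Sum.inr ⟨e, he⟩) ∧
    ((Even (G.label e) ∧ r = embO G (centerEWord G e) * (embV G (xeF G e))⁻¹) ∨
     (Odd (G.label e) ∧
       r = embO G (wAlpha G (Equiv.swap (pt1 e) (pt2 e))) * (embV G (xeF G e))⁻¹))}

def RAut (G : LGraph V) : Set (FreeGroup (GenA G)) :=
  R0 G ∪ (embO G '' (R1 G ∪ R2 G ∪ R3 G ∪ R4 G)) ∪ RtPhi G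

noncomputable def artinMk (G : LGraph V) : FreeGroup V →* ArtinGroup G :=
  QuotientGroup.mk' (Subgroup.normalClosure (artinRels G))

end CLTTF

namespace CLTTF

variable {V : Type} [Fintype V] [DecidableEq V]

set_option linter.unusedSectionVars false

namespace Stmt0

open Relation

variable {V : Type} [Fintype V] [DecidableEq V]

/-- The vertex set of a `Sym2`. -/
def Ee (e : Sym2 V) : Set V := {v | v ∈ e}

@[simp] lemma mem_Ee {e : Sym2 V} {v : V} : v ∈ Ee e ↔ v ∈ e := Iff.rfl

lemma Ee_pair (u w : V) : Ee (s(u, w)) = {u, w} := by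
  ext v; simp [Ee, Sym2.mem_iff]

variable (G : LGraph V)

/-- One step of adjacency inside a set `S`. -/
def SRel (S : Set V) (x y : V) : Prop := x ∈ S ∧ y ∈ S ∧ G.toSimple.Adj x y

/-- Reachability inside a set `S`. -/
def SReach (S : Set V) (x y : V) : Prop := Relation.ReflTransGen (SRel G S) x y

/-- The connected component of `x` inside `S`. -/
def SComp (S : Set V) (x : V) : Set V := {y | SReach G S x y}

variable {G}

lemma srel_symm {S : Set V} : Symmetric (SRel G S) := by
  rintro x y ⟨hx, hy, hadj⟩; exact ⟨hy, hx, hadj.symm⟩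

lemma sreach_refl {S : Set V} (x : V) : SReach G S x x := ReflTransGen.refl

lemma sreach_symm {S : Set V} {x y : V} (h : SReach G S x y) : SReach G S y x :=
  by haveI : Std.Symm (SRel G S) := ⟨srel_symm⟩
     exact (Std.Symm.symm x y (h : ReflTransGen (SRel G S) x y) : ReflTransGen (SRel G S) y x)

lemma sreach_trans {S : Set V} {x y z : V} (h : SReach G S x y) (h' : SReach G S y z) :
    SReach G S x z := ReflTransGen.trans h h'

lemma sreach_mono {S T : Set V} (hST : S ⊆ T) {x y : V} (h : SReach G S x y) :
    SReach G T x y := by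
  refine ReflTransGen.mono (p := SRel G T) ?_ x y h
  show ∀ a b, SRel G S a b → SRel G T a b
  rintro a b ⟨ha, hb, hadj⟩; exact ⟨hST ha, hST hb, hadj⟩

lemma sreach_tail {S : Set V} {x y z : V} (h : SReach G S x y)
    (hy : y ∈ S) (hz : z ∈ S) (hadj : G.toSimple.Adj y z) : SReach G S x z :=
  ReflTransGen.tail h ⟨hy, hz, hadj⟩

lemma mem_scomp_self {S : Set V} (x : V) : x ∈ SComp G S x := sreach_refl x

lemma sreach_mem_right {S : Set V} {x y : V} (h : SReach G S x y) : x = y ∨ y ∈ S := by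
  induction h with
  | refl => exact Or.inl rfl
  | tail _ hstep _ => exact Or.inr hstep.2.1

lemma scomp_subset {S : Set V} {x : V} (hx : x ∈ S) : SComp G S x ⊆ S := by
  intro y hy
  rcases sreach_mem_right hy with rfl | h
  · exact hx
  · exact h

lemma scomp_eq_of_mem {S : Set V} {x y : V} (h : y ∈ SComp G S x) :
    SComp G S y = SComp G S x := by
  ext z
  exact ⟨fun hz => sreach_trans h hz, fun hz => sreach_trans (sreach_symm h) hz⟩

/-- Components are equal or disjoint. -/
lemma scomp_eq_or_disjoint {S : Set V} (x y : V) :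
    SComp G S x = SComp G S y ∨ SComp G S x ∩ SComp G S y = ∅ := by
  by_cases h : (SComp G S x ∩ SComp G S y).Nonempty
  · obtain ⟨z, hzx, hzy⟩ := h
    left
    rw [← scomp_eq_of_mem hzx, ← scomp_eq_of_mem hzy]
  · right; exact Set.not_nonempty_iff_eq_empty.mp h

/-- Adjacency closure of a component: a neighbour of a component point is in the
component or outside `S`. -/
lemma scomp_closure {S : Set V} {x y z : V} (hy : y ∈ SComp G S x)
    (hz : z ∈ S) (hadj : G.toSimple.Adj y z) (hyS : y ∈ S) : z ∈ SComp G S x :=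
  sreach_tail hy hyS hz hadj


section Graph

set_option linter.unusedSectionVars false

variable {G : LGraph V}

@[simp] lemma toSimple_adj {u v : V} :
    G.toSimple.Adj u v ↔ u ≠ v ∧ s(u, v) ∈ G.edges := Iff.rfl

lemma edge_repr (hG : IsCLTTF G) {e : Sym2 V} (he : e ∈ G.edges) :
    ∃ u w, u ≠ w ∧ e = s(u, w) := by
  induction e with
  | _ u w =>
    refine ⟨u, w, fun h => ?_, rfl⟩
    exact hG.good.1 _ he (by rw [h]; exact Sym2.mk_isDiag_iff.mpr rfl)

lemma adj_of_edge {u w : V} (hG : IsCLTTF G) (h : s(u, w) ∈ G.edges) (hne : u ≠ w) :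
    G.toSimple.Adj u w := ⟨hne, h⟩

lemma Ee_eq_of_edges (hG : IsCLTTF G) {e f : Sym2 V} (he : e ∈ G.edges)
    (h : Ee e = Ee f) : e = f := by
  obtain ⟨a, b, hab, rfl⟩ := edge_repr hG he
  induction f with
  | _ c d =>
    have h' : ∀ v, (v = a ∨ v = b) ↔ (v = c ∨ v = d) := by
      intro v
      have := Set.ext_iff.mp h v
      simpa [Ee, Sym2.mem_iff] using this
    have ha := (h' a).mp (Or.inl rfl)
    have hb := (h' b).mp (Or.inr rfl)
    rcases ha with rfl | rfl
    · rcases hb with rfl | rfl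
      · exact absurd rfl hab
      · rfl
    · rcases hb with rfl | rfl
      · exact Sym2.eq_swap
      · exact absurd rfl hab

/-- There are no cut vertices in an edge-separated graph. -/
lemma no_cut (hES : EdgeSeparated G) {w : V} {X : Set V} (hX : X.Nonempty)
    (hwX : w ∉ X) (hrest : ((X ∪ {w})ᶜ).Nonempty)
    (hedge : ∀ e ∈ G.edges, (∀ v ∈ e, v ∈ X ∪ {w}) ∨ (∀ v ∈ e, v ∈ Xᶜ)) : False := by
  refine hES ⟨w, X ∪ {w}, Xᶜ, ?_, ?_, ?_, ?_, ?_⟩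
  · ext v; by_cases hv : v ∈ X <;> simp [hv]
  · ext v
    constructor
    · rintro ⟨hv1, hv2⟩
      rcases hv1 with hv1 | hv1
      · exact absurd hv1 hv2
      · exact hv1
    · rintro rfl
      exact ⟨Or.inr rfl, hwX⟩
  · intro h
    obtain ⟨x, hx⟩ := hX
    have : x ∈ ({w} : Set V) := h ▸ Or.inl hx
    rw [Set.mem_singleton_iff] at this
    exact hwX (this ▸ hx)
  · intro h
    obtain ⟨y, hy⟩ := hrest
    rw [Set.mem_compl_iff, Set.mem_union] at hy
    push_neg at hy
    have : y ∈ ({w} : Set V) := h ▸ hy.1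
    exact hy.2 this
  · intro e he
    rcases hedge e he with h | h
    · exact Or.inl h
    · exact Or.inr h

/-- Every endpoint of an edge `s(u,w)` is adjacent to every component of the
graph minus `{u, w}`. -/
lemma comp_attach (hG : IsCLTTF G) (hES : EdgeSeparated G) {u w x : V}
    (hk : s(u, w) ∈ G.edges) (hx : x ∉ Ee (s(u, w))) :
    ∃ z ∈ SComp G (Ee s(u, w))ᶜ x, G.toSimple.Adj u z := by
  by_contra hno
  push_neg at hno
  have huw : u ≠ w := by
    rcases edge_repr hG hk with ⟨a, b, hab, habe⟩
    intro h
    have : (s(u,w)).IsDiag := Sym2.mk_isDiag_iff.mpr h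
    exact hG.good.1 _ hk this
  set κ := SComp G (Ee s(u, w))ᶜ x with hκdef
  have hκsub : κ ⊆ (Ee s(u, w))ᶜ := scomp_subset hx
  have huκ : u ∉ κ := fun h => (hκsub h) (by simp [Ee_pair])
  have hwκ : w ∉ κ := fun h => (hκsub h) (by simp [Ee_pair])
  refine no_cut hES ⟨x, mem_scomp_self x⟩ hwκ ⟨u, ?_⟩ ?_
  · simp only [Set.mem_compl_iff, Set.mem_union, Set.mem_singleton_iff]
    push_neg
    exact ⟨huκ, huw⟩
  · intro e he
    by_cases hmeet : ∃ v ∈ e, v ∈ κ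
    · left
      obtain ⟨a, b, hab, rfl⟩ := edge_repr hG he
      obtain ⟨v, hv, hvκ⟩ := hmeet
      rw [Sym2.mem_iff] at hv
      have key : ∀ c d : V, c ≠ d → s(c,d) ∈ G.edges → c ∈ κ → d ∈ κ ∪ {w} := by
        intro c d hcd hcd' hcκ
        by_cases hdE : d ∈ Ee (s(u, w))
        · rw [Ee_pair] at hdE
          rcases hdE with rfl | rfl
          · exact absurd ((adj_of_edge hG hcd' hcd).symm) (hno c hcκ)
          · exact Set.mem_union_right _ rfl
        · exact Set.mem_union_left _
            (scomp_closure hcκ hdE (adj_of_edge hG hcd' hcd) (hκsub hcκ))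
      rcases hv with rfl | rfl
      · have hb := key v b hab he hvκ
        intro z hz
        rw [Sym2.mem_iff] at hz
        rcases hz with rfl | rfl
        · exact Set.mem_union_left _ hvκ
        · exact hb
      · have ha := key v a (Ne.symm hab) (by rw [Sym2.eq_swap]; exact he) hvκ
        intro z hz
        rw [Sym2.mem_iff] at hz
        rcases hz with rfl | rfl
        · exact ha
        · exact Set.mem_union_left _ hvκ
    · right
      intro v hv
      push_neg at hmeet
      exact hmeet v hv

end Graph

section Comps

set_option linter.unusedSectionVars false

variable {G : LGraph V}

lemma sreach_in_scomp {S : Set V} {x y : V} (h : y ∈ SComp G S x) :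
    SReach G (SComp G S x) x y := by
  induction h with
  | refl => exact sreach_refl x
  | tail hab hstep ih =>
    rename_i b c
    exact sreach_tail ih hab (ReflTransGen.tail hab hstep) hstep.2.2

lemma edge_ends_ne (hG : IsCLTTF G) {u w : V} (hk : s(u, w) ∈ G.edges) : u ≠ w := by
  intro h
  exact hG.good.1 _ hk (Sym2.mk_isDiag_iff.mpr h)

/-- Any vertex outside a component `κ` of `Γ - {u,w}` and distinct from `u`
reaches `w` while avoiding `κ ∪ {u}`. -/
lemma reach_avoid_comp (hG : IsCLTTF G) (hES : EdgeSeparated G) {u w x : V}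
    (hk : s(u, w) ∈ G.edges) (hx : x ∉ Ee s(u, w)) {y : V}
    (hyκ : y ∉ SComp G (Ee s(u, w))ᶜ x) (hyu : y ≠ u) :
    SReach G (SComp G (Ee s(u, w))ᶜ x ∪ {u})ᶜ y w := by
  set κ := SComp G (Ee s(u, w))ᶜ x with hκdef
  have hκsub : κ ⊆ (Ee s(u, w))ᶜ := scomp_subset hx
  have huw : u ≠ w := edge_ends_ne hG hk
  by_cases hyw : y = w
  · subst hyw; exact sreach_refl y
  have hyE : y ∉ Ee s(u, w) := by
    rw [Ee_pair]; rintro (rfl | rfl)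
    · exact hyu rfl
    · exact hyw rfl
  set χ := SComp G (Ee s(u, w))ᶜ y with hχdef
  have hdisj : χ ∩ κ = ∅ := by
    rcases scomp_eq_or_disjoint (G := G) (S := (Ee s(u, w))ᶜ) y x with h | h
    · refine absurd ?_ hyκ
      rw [hκdef, ← h]
      exact mem_scomp_self y
    · exact h
  have hwu : s(w, u) ∈ G.edges := by rwa [Sym2.eq_swap]
  have hxE' : x ∉ Ee s(w, u) := by rwa [Sym2.eq_swap]
  have hyE' : y ∉ Ee s(w, u) := by
    rw [show s(w, u) = s(u, w) from Sym2.eq_swap]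
    exact hyE
  obtain ⟨z, hzχ, hadjz⟩ := comp_attach (x := y) hG hES hwu hyE'
  rw [show s(w, u) = s(u, w) from Sym2.eq_swap] at hzχ
  rw [← hχdef] at hzχ
  have hχsub : χ ⊆ (κ ∪ {u})ᶜ := by
    intro a ha
    simp only [Set.mem_compl_iff, Set.mem_union, Set.mem_singleton_iff]
    push_neg
    refine ⟨fun haκ => ?_, fun h => ?_⟩
    · have : a ∈ χ ∩ κ := ⟨ha, haκ⟩
      rw [hdisj] at this
      exact Set.notMem_empty a this
    · have haE : a ∈ (Ee s(u, w))ᶜ := scomp_subset (x := y) hyE ha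
      exact haE (by rw [h, Ee_pair]; exact Or.inl rfl)
  have h1 : SReach G (κ ∪ {u})ᶜ y z := sreach_mono hχsub (sreach_in_scomp hzχ)
  refine sreach_tail h1 (hχsub hzχ) ?_ hadjz.symm
  simp only [Set.mem_compl_iff, Set.mem_union, Set.mem_singleton_iff]
  push_neg
  exact ⟨fun h => (hκsub h) (by rw [Ee_pair]; exact Or.inr rfl), Ne.symm huw⟩

/-- If the two ends of `k₃` lie in `κ ∪ {u}`, then any two vertices outside
`κ ∪ {u}` are in the same component of `Γ - k₃`. -/
lemma same_comp_outside (hG : IsCLTTF G) (hES : EdgeSeparated G) {u w x : V}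
    (hk : s(u, w) ∈ G.edges) (hx : x ∉ Ee s(u, w)) {k₃ : Sym2 V}
    (hk₃ : Ee k₃ ⊆ SComp G (Ee s(u, w))ᶜ x ∪ {u}) {y z : V}
    (hy : y ∉ SComp G (Ee s(u, w))ᶜ x ∪ {u}) (hz : z ∉ SComp G (Ee s(u, w))ᶜ x ∪ {u}) :
    SReach G (Ee k₃)ᶜ y z := by
  have hyu : y ≠ u := by
    intro h; exact hy (by rw [h]; exact Set.mem_union_right _ rfl)
  have hzu : z ≠ u := by
    intro h; exact hz (by rw [h]; exact Set.mem_union_right _ rfl)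
  have hyκ : y ∉ SComp G (Ee s(u, w))ᶜ x := fun h => hy (Set.mem_union_left _ h)
  have hzκ : z ∉ SComp G (Ee s(u, w))ᶜ x := fun h => hz (Set.mem_union_left _ h)
  have h1 := reach_avoid_comp hG hES hk hx hyκ hyu
  have h2 := reach_avoid_comp hG hES hk hx hzκ hzu
  have hmono : (SComp G (Ee s(u, w))ᶜ x ∪ {u})ᶜ ⊆ (Ee k₃)ᶜ :=
    Set.compl_subset_compl.mpr hk₃
  exact sreach_trans (sreach_mono hmono h1) (sreach_symm (sreach_mono hmono h2))

lemma decomp_stay {k : Sym2 V} {S₁ S₂ : Set V} (hd : IsDecomp G (Ee k) S₁ S₂)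
    {x z : V} (hx₁ : x ∈ S₁) (hxE : x ∉ Ee k) (h : SReach G (Ee k)ᶜ x z) :
    z ∈ S₁ ∧ z ∉ Ee k := by
  induction h with
  | refl => exact ⟨hx₁, hxE⟩
  | tail hab hstep ih =>
    rename_i b c
    obtain ⟨hb₁, hbE⟩ := ih
    have hcE : c ∉ Ee k := hstep.2.1
    have hedge : s(b, c) ∈ G.edges := hstep.2.2.2
    rcases hd.edge_cond _ hedge with h | h
    · exact ⟨h c (Sym2.mem_mk_right b c), hcE⟩
    · exfalso
      have hb₂ : b ∈ S₂ := h b (Sym2.mem_mk_left b c)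
      have : b ∈ Ee k := by rw [← hd.inter_eq]; exact ⟨hb₁, hb₂⟩
      exact hbE this

lemma decomp_separates {k : Sym2 V} {S₁ S₂ : Set V} (hd : IsDecomp G (Ee k) S₁ S₂)
    {x y : V} (hx₁ : x ∈ S₁) (hxE : x ∉ Ee k) (hy₂ : y ∈ S₂) (hyE : y ∉ Ee k) :
    ¬ SReach G (Ee k)ᶜ x y := by
  intro h
  obtain ⟨hy₁, -⟩ := decomp_stay hd hx₁ hxE h
  exact hyE (by rw [← hd.inter_eq]; exact ⟨hy₁, hy₂⟩)

lemma decomp_symm {S₀ S₁ S₂ : Set V} (hd : IsDecomp G S₀ S₁ S₂) :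
    IsDecomp G S₀ S₂ S₁ := by
  refine ⟨?_, ?_, hd.ne₂, hd.ne₁, fun e he => (hd.edge_cond e he).symm⟩
  · rw [Set.union_comm]; exact hd.union_eq
  · rw [Set.inter_comm]; exact hd.inter_eq

/-- Backward direction of the component characterisation of indecomposability. -/
lemma indec_of_comps {S : Set V}
    (h : ∀ k, IsSepEdge G k → ∀ x ∈ S, ∀ y ∈ S, x ∉ Ee k → y ∉ Ee k →
      SReach G (Ee k)ᶜ x y) : Indecomposable G S := by
  intro e he S₁ S₂ hd
  have hd' : IsDecomp G (Ee e) S₁ S₂ := hd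
  by_cases hSE : ∀ x ∈ S, x ∈ Ee e
  · left
    intro x hx
    have : x ∈ S₁ ∩ S₂ := by rw [hd'.inter_eq]; exact hSE x hx
    exact this.1
  · push_neg at hSE
    obtain ⟨x₀, hx₀S, hx₀E⟩ := hSE
    have hsep : IsSepEdge G e := ⟨he, S₁, S₂, hd⟩
    have hx₀mem : x₀ ∈ S₁ ∪ S₂ := by rw [hd'.union_eq]; trivial
    have key : ∀ T₁ T₂ : Set V, IsDecomp G (Ee e) T₁ T₂ → x₀ ∈ T₁ → S ⊆ T₁ := by
      intro T₁ T₂ hT hx₀T y hyS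
      by_cases hyE : y ∈ Ee e
      · have : y ∈ T₁ ∩ T₂ := by rw [hT.inter_eq]; exact hyE
        exact this.1
      · exact (decomp_stay hT hx₀T hx₀E (h e hsep x₀ hx₀S y hyS hx₀E hyE)).1
    rcases hx₀mem with hx₀1 | hx₀2
    · exact Or.inl (key S₁ S₂ hd' hx₀1)
    · exact Or.inr (key S₂ S₁ (decomp_symm hd') hx₀2)

/-- Forward direction: an indecomposable set lies in one component of `Γ - k`. -/
lemma comps_of_indec (hG : IsCLTTF G) {S : Set V} (hind : Indecomposable G S)
    {k : Sym2 V} (hk : IsSepEdge G k) {x y : V} (hxS : x ∈ S) (hyS : y ∈ S)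
    (hxE : x ∉ Ee k) (hyE : y ∉ Ee k) : SReach G (Ee k)ᶜ x y := by
  by_contra hnr
  set κ := SComp G (Ee k)ᶜ x with hκdef
  have hκsub : κ ⊆ (Ee k)ᶜ := scomp_subset hxE
  have hdec : IsDecomp G (Ee k) (κ ∪ Ee k) κᶜ := by
    refine ⟨?_, ?_, ?_, ?_, ?_⟩
    · ext v
      simp only [Set.mem_union, Set.mem_compl_iff, Set.mem_univ, iff_true]
      by_cases hv : v ∈ κ
      · exact Or.inl (Or.inl hv)
      · exact Or.inr hv
    · ext v
      constructor
      · rintro ⟨hv1 | hv1, hv2⟩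
        · exact absurd hv1 hv2
        · exact hv1
      · intro hv
        exact ⟨Or.inr hv, fun h => (hκsub h) hv⟩
    · intro h
      have : x ∈ Ee k := h ▸ Set.mem_union_left _ (mem_scomp_self x)
      exact hxE this
    · intro h
      have hyκc : y ∈ κᶜ := hnr
      have : y ∈ Ee k := h ▸ hyκc
      exact hyE this
    · intro e' he'
      obtain ⟨a, b, hab, rfl⟩ := edge_repr hG he'
      by_cases hmeet : a ∈ κ ∨ b ∈ κ
      · left
        have key : ∀ c d : V, c ≠ d → s(c, d) ∈ G.edges → c ∈ κ → d ∈ κ ∪ Ee k := by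
          intro c d hcd hcd' hcκ
          by_cases hdE : d ∈ Ee k
          · exact Set.mem_union_right _ hdE
          · exact Set.mem_union_left _
              (scomp_closure hcκ hdE (adj_of_edge hG hcd' hcd) (hκsub hcκ))
        intro v hv
        rw [Sym2.mem_iff] at hv
        rcases hmeet with hm | hm
        · rcases hv with rfl | rfl
          · exact Set.mem_union_left _ hm
          · exact key a v hab he' hm
        · rcases hv with rfl | rfl
          · exact key b v (Ne.symm hab) (by rw [Sym2.eq_swap]; exact he') hm
          · exact Set.mem_union_left _ hm
      · right
        push_neg at hmeet
        intro v hv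
        rw [Sym2.mem_iff] at hv
        rcases hv with rfl | rfl
        · exact hmeet.1
        · exact hmeet.2
  rcases hind k hk.1 _ _ hdec with h | h
  · have := h hyS
    rcases this with h' | h'
    · exact hnr h'
    · exact hyE h'
  · exact (h hxS) (mem_scomp_self x)

end Comps

section Chunks

set_option linter.unusedSectionVars false

variable {G : LGraph V}

lemma sreach_induce_reachable {S : Set V} {x y : V} (h : SReach G S x y)
    (hx : x ∈ S) (hy : y ∈ S) :
    (G.toSimple.induce S).Reachable ⟨x, hx⟩ ⟨y, hy⟩ := by
  induction h with
  | refl => rfl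
  | tail hab hstep ih =>
    rename_i b c
    have hb : b ∈ S := hstep.1
    have hc : c ∈ S := hstep.2.1
    have h1 : (G.toSimple.induce S).Reachable ⟨x, hx⟩ ⟨b, hb⟩ := ih hb
    refine h1.trans (SimpleGraph.Adj.reachable ?_)
    show G.toSimple.Adj b c
    exact hstep.2.2

lemma induce_reachable_sreach {S : Set V} {x y : V} {hx : x ∈ S} {hy : y ∈ S}
    (h : (G.toSimple.induce S).Reachable ⟨x, hx⟩ ⟨y, hy⟩) : SReach G S x y := by
  rw [SimpleGraph.reachable_iff_reflTransGen] at h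
  have key : ∀ a b : ↥S, ReflTransGen (G.toSimple.induce S).Adj a b →
      SReach G S a.1 b.1 := by
    intro a b hab
    induction hab with
    | refl => exact sreach_refl _
    | tail hab hstep ih =>
      rename_i b' c'
      exact sreach_tail ih b'.2 c'.2 hstep
  exact key ⟨x, hx⟩ ⟨y, hy⟩ h

lemma connfull_of_sreach {S : Set V} (hne : S.Nonempty)
    (h : ∀ x ∈ S, ∀ y ∈ S, SReach G S x y) : ConnFull G S := by
  obtain ⟨x₀, hx₀⟩ := hne
  have : Nonempty ↥S := ⟨⟨x₀, hx₀⟩⟩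
  refine ⟨fun a b => ?_⟩
  obtain ⟨a, ha⟩ := a
  obtain ⟨b, hb⟩ := b
  exact sreach_induce_reachable (h a ha b hb) ha hb

lemma connfull_nonempty {S : Set V} (h : ConnFull G S) : S.Nonempty := by
  obtain ⟨⟨x, hx⟩⟩ := h.nonempty
  exact ⟨x, hx⟩

lemma connfull_sreach {S : Set V} (h : ConnFull G S) {x y : V}
    (hx : x ∈ S) (hy : y ∈ S) : SReach G S x y :=
  induce_reachable_sreach (h.preconnected ⟨x, hx⟩ ⟨y, hy⟩)

lemma connfull_union {S T : Set V} (hS : ConnFull G S) (hT : ConnFull G T)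
    (hST : (S ∩ T).Nonempty) : ConnFull G (S ∪ T) := by
  obtain ⟨v, hvS, hvT⟩ := hST
  refine connfull_of_sreach ⟨v, Or.inl hvS⟩ ?_
  have hreach : ∀ x ∈ S ∪ T, SReach G (S ∪ T) x v := by
    rintro x (hx | hx)
    · exact sreach_mono Set.subset_union_left (connfull_sreach hS hx hvS)
    · exact sreach_mono Set.subset_union_right (connfull_sreach hT hx hvT)
  intro x hx y hy
  exact sreach_trans (hreach x hx) (sreach_symm (hreach y hy))

lemma exists_nbr_in {S : Set V} (h : ConnFull G S) {x y : V} (hx : x ∈ S)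
    (hy : y ∈ S) (hne : x ≠ y) : ∃ z ∈ S, G.toSimple.Adj x z := by
  have := connfull_sreach h hx hy
  rcases ReflTransGen.cases_head this with h' | ⟨c, hc, -⟩
  · exact absurd h' hne
  · exact ⟨c, hc.2.1, hc.2.2⟩

lemma connfull_singleton (x : V) : ConnFull G {x} := by
  have : Nonempty ↥({x} : Set V) := ⟨⟨x, rfl⟩⟩
  refine ⟨fun a b => ?_⟩
  obtain ⟨a, ha⟩ := a
  obtain ⟨b, hb⟩ := b
  have : a = b := by
    rw [Set.mem_singleton_iff] at ha hb
    rw [ha, hb]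
  subst this
  rfl

lemma connfull_pair {u w : V} (hG : IsCLTTF G) (h : s(u, w) ∈ G.edges)
    (hne : u ≠ w) : ConnFull G {u, w} := by
  refine connfull_of_sreach ⟨u, Or.inl rfl⟩ ?_
  have key : SReach G {u, w} u w :=
    ReflTransGen.single ⟨Or.inl rfl, Or.inr rfl, adj_of_edge hG h hne⟩
  rintro x (rfl | rfl) y (rfl | rfl)
  · exact sreach_refl _
  · exact key
  · exact sreach_symm key
  · exact sreach_refl _

lemma pair_indec {u w : V} (h : s(u, w) ∈ G.edges) :
    Indecomposable G {u, w} := by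
  intro e he S₁ S₂ hd
  rcases hd.edge_cond _ h with h' | h'
  · left
    rintro x (rfl | rfl)
    · exact h' x (Sym2.mem_mk_left x w)
    · exact h' x (Sym2.mem_mk_right u x)
  · right
    rintro x (rfl | rfl)
    · exact h' x (Sym2.mem_mk_left x w)
    · exact h' x (Sym2.mem_mk_right u x)

/-- Any indecomposable connected full subgraph extends to a chunk. -/
lemma exists_chunk {S : Set V} (hc : ConnFull G S) (hi : Indecomposable G S) :
    ∃ C, IsChunk G C ∧ S ⊆ C := by
  set 𝒯 : Set (Set V) := {T | ConnFull G T ∧ Indecomposable G T ∧ S ⊆ T} with h𝒯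
  have hfin : 𝒯.Finite := Set.toFinite _
  have hne : 𝒯.Nonempty := ⟨S, hc, hi, subset_refl S⟩
  obtain ⟨C, hC, hmax⟩ := Set.Finite.exists_maximalFor id 𝒯 hfin hne
  refine ⟨C, ⟨hC.1, hC.2.1, ?_⟩, hC.2.2⟩
  intro T hT1 hT2 hsub
  exact hsub.antisymm (hmax ⟨hT1, hT2, hC.2.2.trans hsub⟩ hsub)

lemma chunk_of_edge {u w : V} (hG : IsCLTTF G) (h : s(u, w) ∈ G.edges) :
    ∃ C, IsChunk G C ∧ u ∈ C ∧ w ∈ C := by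
  obtain ⟨C, hC, hsub⟩ :=
    exists_chunk (connfull_pair hG h (edge_ends_ne hG h)) (pair_indec h)
  exact ⟨C, hC, hsub (Or.inl rfl), hsub (Or.inr rfl)⟩

lemma exists_adj (hG : IsCLTTF G) (hV : 3 ≤ Fintype.card V) (x : V) :
    ∃ z, G.toSimple.Adj x z := by
  have : 1 < Fintype.card V := by omega
  obtain ⟨y, hy⟩ := Fintype.exists_ne_of_one_lt_card this x
  have hreach := hG.connected.preconnected x y
  rw [SimpleGraph.reachable_iff_reflTransGen] at hreach
  rcases ReflTransGen.cases_head hreach with h | ⟨c, hc, -⟩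
  · exact absurd h.symm hy
  · exact ⟨c, hc⟩

/-- Every vertex of a chunk has a neighbour inside the chunk. -/
lemma chunk_nbr (hG : IsCLTTF G) (hV : 3 ≤ Fintype.card V) {C : Set V}
    (hC : IsChunk G C) {x : V} (hx : x ∈ C) : ∃ z ∈ C, G.toSimple.Adj x z := by
  by_cases hsing : ∃ y ∈ C, y ≠ x
  · obtain ⟨y, hy, hyx⟩ := hsing
    exact exists_nbr_in hC.1 hx hy (Ne.symm hyx)
  · push_neg at hsing
    exfalso
    obtain ⟨z, hz⟩ := exists_adj hG hV x
    have hCx : C = {x} := by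
      ext v
      constructor
      · intro hv; exact hsing v hv
      · rintro rfl; exact hx
    have hedge : s(x, z) ∈ G.edges := hz.2
    have hsub : C ⊆ {x, z} := by rw [hCx]; intro v hv; exact Or.inl hv
    have := hC.2.2 {x, z} (connfull_pair hG hedge hz.1) (pair_indec hedge) hsub
    have hzC : z ∈ C := by rw [this]; exact Or.inr rfl
    rw [hCx] at hzC
    exact hz.1 (Set.mem_singleton_iff.mp hzC).symm

end Chunks

section TwoChunks

set_option linter.unusedSectionVars false

variable {G : LGraph V}

lemma Ee_exists_not_mem (hG : IsCLTTF G) {f k : Sym2 V} (hf : f ∈ G.edges)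
    (hne : f ≠ k) : ∃ t, t ∈ Ee f ∧ t ∉ Ee k := by
  by_contra h
  push_neg at h
  apply hne
  apply Ee_eq_of_edges hG hf
  obtain ⟨p, q, hpq, rfl⟩ := edge_repr hG hf
  induction k with
  | _ c d =>
    have hp : p ∈ Ee s(c, d) := h p (by rw [Ee_pair]; exact Or.inl rfl)
    have hq : q ∈ Ee s(c, d) := h q (by rw [Ee_pair]; exact Or.inr rfl)
    rw [Ee_pair] at hp hq
    rw [Ee_pair, Ee_pair]
    ext v
    simp only [Set.mem_insert_iff, Set.mem_singleton_iff]
    rcases hp with rfl | rfl <;> rcases hq with rfl | rfl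
    · exact absurd rfl hpq
    · tauto
    · tauto
    · exact absurd rfl hpq

lemma chunks_meet (hG : IsCLTTF G) {C D : Set V} (hC : IsChunk G C)
    (hD : IsChunk G D) (hne : C ≠ D) (hcap : (C ∩ D).Nonempty) :
    ∃ k S₁ S₂, IsSepEdge G k ∧ IsDecomp G (Ee k) S₁ S₂ ∧ C ⊆ S₁ ∧ D ⊆ S₂ ∧
      C ∩ D ⊆ Ee k := by
  have hunion_conn := connfull_union hC.1 hD.1 hcap
  have hnind : ¬ Indecomposable G (C ∪ D) := by
    intro hind
    have h1 := hC.2.2 (C ∪ D) hunion_conn hind Set.subset_union_left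
    have h2 : D ⊆ C := by rw [h1]; exact Set.subset_union_right
    exact hne (hD.2.2 C hC.1 hC.2.1 h2).symm
  unfold Indecomposable at hnind
  push_neg at hnind
  obtain ⟨e, he, S₁, S₂, hd, hn1, hn2⟩ := hnind
  have hd' : IsDecomp G (Ee e) S₁ S₂ := hd
  have hsep : IsSepEdge G e := ⟨he, S₁, S₂, hd⟩
  have hCsub := hC.2.1 e he S₁ S₂ hd
  have hDsub := hD.2.1 e he S₁ S₂ hd
  rcases hCsub with hC1 | hC2 <;> rcases hDsub with hD1 | hD2
  · exact absurd (Set.union_subset hC1 hD1) hn1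
  · refine ⟨e, S₁, S₂, hsep, hd', hC1, hD2, ?_⟩
    rintro v ⟨h1, h2⟩
    rw [show Ee e = S₁ ∩ S₂ from hd'.inter_eq.symm]
    exact ⟨hC1 h1, hD2 h2⟩
  · refine ⟨e, S₂, S₁, hsep, decomp_symm hd', hC2, hD1, ?_⟩
    rintro v ⟨h1, h2⟩
    rw [show Ee e = S₁ ∩ S₂ from hd'.inter_eq.symm]
    exact ⟨hD1 h2, hC2 h1⟩
  · exact absurd (Set.union_subset hC2 hD2) hn2

/-- Two chunks containing the ends of a separating edge `f`, whose remainders lie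
in the same component of `Γ - f`, are equal. -/
lemma side_unique (hG : IsCLTTF G) {C D : Set V} (hC : IsChunk G C)
    (hD : IsChunk G D) {f : Sym2 V} (hf : IsSepEdge G f) (hfC : Ee f ⊆ C)
    (hfD : Ee f ⊆ D) {x y : V} (hxC : x ∈ C) (hxE : x ∉ Ee f) (hyD : y ∈ D)
    (hyE : y ∉ Ee f) (hxy : SReach G (Ee f)ᶜ x y) : C = D := by
  have hfne : (Ee f).Nonempty := by
    obtain ⟨p, q, hpq, rfl⟩ := edge_repr hG hf.1
    exact ⟨p, by rw [Ee_pair]; exact Or.inl rfl⟩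
  have hcap : (C ∩ D).Nonempty := by
    obtain ⟨p, hp⟩ := hfne
    exact ⟨p, hfC hp, hfD hp⟩
  have hind : Indecomposable G (C ∪ D) := by
    refine indec_of_comps ?_
    intro k hk a haCD b hbCD haE hbE
    by_cases hkf : k = f
    · subst hkf
      have key : ∀ c ∈ C ∪ D, c ∉ Ee k → SReach G (Ee k)ᶜ c x := by
        rintro c (hc | hc) hcE
        · exact comps_of_indec hG hC.2.1 hk hc hxC hcE hxE
        · exact sreach_trans (comps_of_indec hG hD.2.1 hk hc hyD hcE hyE)
            (sreach_symm hxy)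
      exact sreach_trans (key a haCD haE) (sreach_symm (key b hbCD hbE))
    · obtain ⟨t, htf, htk⟩ := Ee_exists_not_mem hG hf.1 (fun h => hkf h.symm)
      have htC : t ∈ C := hfC htf
      have htD : t ∈ D := hfD htf
      have key : ∀ c ∈ C ∪ D, c ∉ Ee k → SReach G (Ee k)ᶜ c t := by
        rintro c (hc | hc) hcE
        · exact comps_of_indec hG hC.2.1 hk hc htC hcE htk
        · exact comps_of_indec hG hD.2.1 hk hc htD hcE htk
      exact sreach_trans (key a haCD haE) (sreach_symm (key b hbCD hbE))
  have hconn := connfull_union hC.1 hD.1 hcap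
  have h1 := hC.2.2 (C ∪ D) hconn hind Set.subset_union_left
  have h2 : D ⊆ C := by rw [h1]; exact Set.subset_union_right
  exact (hD.2.2 C hC.1 hC.2.1 h2).symm

end TwoChunks

section Walks

set_option linter.unusedSectionVars false

/-- Walks staying inside a vertex set `S`. -/
inductive SWalk (G : LGraph V) (S : Set V) : V → V → Type _
  | nil {x : V} (hx : x ∈ S) : SWalk G S x x
  | cons {x y z : V} (hx : x ∈ S) (hadj : G.toSimple.Adj x y)
      (w : SWalk G S y z) : SWalk G S x z

namespace SWalk

variable {G : LGraph V} {S : Set V}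

def length : ∀ {x y : V}, SWalk G S x y → ℕ
  | _, _, nil _ => 0
  | _, _, cons _ _ w => w.length + 1

def support : ∀ {x y : V}, SWalk G S x y → List V
  | x, _, nil _ => [x]
  | x, _, cons _ _ w => x :: w.support

lemma start_mem_S : ∀ {x y : V} (w : SWalk G S x y), x ∈ S
  | _, _, nil hx => hx
  | _, _, cons hx _ _ => hx

lemma end_mem_S : ∀ {x y : V} (w : SWalk G S x y), y ∈ S
  | _, _, nil hx => hx
  | _, _, cons _ _ w => w.end_mem_S

lemma start_mem_support : ∀ {x y : V} (w : SWalk G S x y), x ∈ w.support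
  | _, _, nil _ => List.mem_singleton.mpr rfl
  | _, _, cons _ _ _ => List.mem_cons_self

lemma end_mem_support : ∀ {x y : V} (w : SWalk G S x y), y ∈ w.support
  | _, _, nil _ => List.mem_singleton.mpr rfl
  | _, _, cons _ _ w => List.mem_cons_of_mem _ w.end_mem_support

lemma support_subset : ∀ {x y : V} (w : SWalk G S x y), ∀ v ∈ w.support, v ∈ S
  | _, _, nil hx, v, hv => by
      rw [support, List.mem_singleton] at hv; subst hv; exact hx
  | _, _, cons hx hadj w, v, hv => by
      rw [support, List.mem_cons] at hv
      rcases hv with rfl | hv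
      · exact hx
      · exact w.support_subset v hv

def append : ∀ {x y z : V}, SWalk G S x y → SWalk G S y z → SWalk G S x z
  | _, _, _, nil _, w₂ => w₂
  | _, _, _, cons hx hadj w, w₂ => cons hx hadj (w.append w₂)

lemma length_append : ∀ {x y z : V} (w₁ : SWalk G S x y) (w₂ : SWalk G S y z),
    (w₁.append w₂).length = w₁.length + w₂.length
  | _, _, _, nil _, w₂ => by simp [append, length]
  | _, _, _, cons hx hadj w, w₂ => by
      simp [append, length, length_append w w₂]; omega

lemma mem_support_append : ∀ {x y z : V} (w₁ : SWalk G S x y) (w₂ : SWalk G S y z),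
    ∀ v ∈ (w₁.append w₂).support, v ∈ w₁.support ∨ v ∈ w₂.support
  | _, _, _, nil _, w₂, v, hv => Or.inr hv
  | _, _, _, cons hx hadj w, w₂, v, hv => by
      rw [append, support, List.mem_cons] at hv
      rcases hv with rfl | hv
      · exact Or.inl (start_mem_support _)
      · rcases mem_support_append w w₂ v hv with h | h
        · exact Or.inl (List.mem_cons_of_mem _ h)
        · exact Or.inr h

def reverse : ∀ {x y : V}, SWalk G S x y → SWalk G S y x
  | _, _, nil hx => nil hx
  | _, _, cons hx hadj w => w.reverse.append (cons (w.start_mem_S) hadj.symm (nil hx))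

lemma length_reverse : ∀ {x y : V} (w : SWalk G S x y),
    w.reverse.length = w.length
  | _, _, nil _ => rfl
  | _, _, cons hx hadj w => by
      rw [reverse, length_append, length_reverse w]
      simp [length]

lemma mem_support_reverse : ∀ {x y : V} (w : SWalk G S x y),
    ∀ v ∈ w.reverse.support, v ∈ w.support
  | _, _, nil _, v, hv => hv
  | _, _, cons hx hadj w, v, hv => by
      rcases mem_support_append _ _ v hv with h | h
      · exact List.mem_cons_of_mem _ (mem_support_reverse w v h)
      · rw [support, support, List.mem_cons, List.mem_singleton] at h
        rcases h with rfl | rfl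
        · exact List.mem_cons_of_mem _ w.start_mem_support
        · exact List.mem_cons_self

/-- Split a walk at an element of its support. -/
lemma splitAt [DecidableEq V] : ∀ {x y : V} (w : SWalk G S x y) (b : V),
    b ∈ w.support →
    ∃ (w₁ : SWalk G S x b) (w₂ : SWalk G S b y),
      w₁.length + w₂.length = w.length ∧
      (∀ v ∈ w₁.support, v ∈ w.support) ∧ (∀ v ∈ w₂.support, v ∈ w.support)
  | _, _, nil hx, b, hb => by
      rw [support, List.mem_singleton] at hb
      subst hb
      exact ⟨nil hx, nil hx, rfl, fun v hv => hv, fun v hv => hv⟩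
  | x, y, cons hx hadj w, b, hb => by
      by_cases hbx : b = x
      · subst hbx
        exact ⟨nil hx, cons hx hadj w, by simp [length], fun v hv => by
            rw [support, List.mem_singleton] at hv
            subst hv
            exact start_mem_support _,
          fun v hv => hv⟩
      · have hb' : b ∈ w.support := by
          rw [support, List.mem_cons] at hb
          rcases hb with rfl | hb
          · exact absurd rfl hbx
          · exact hb
        obtain ⟨w₁, w₂, hlen, hs₁, hs₂⟩ := splitAt w b hb'
        refine ⟨cons hx hadj w₁, w₂, by simp [length]; omega, ?_, ?_⟩
        · intro v hv
          rw [support, List.mem_cons] at hv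
          rcases hv with rfl | hv
          · exact start_mem_support _
          · exact List.mem_cons_of_mem _ (hs₁ v hv)
        · intro v hv
          exact List.mem_cons_of_mem _ (hs₂ v hv)

end SWalk

variable {G : LGraph V}

lemma swalk_of_sreach {S : Set V} {x y : V} (h : SReach G S x y) (hx : x ∈ S) :
    ∃ w : SWalk G S x y, True := by
  induction h using Relation.ReflTransGen.head_induction_on with
  | refl => exact ⟨SWalk.nil hx, trivial⟩
  | head hstep _ ih =>
    obtain ⟨w, -⟩ := ih hstep.2.1
    exact ⟨SWalk.cons hstep.1 hstep.2.2 w, trivial⟩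

lemma sreach_of_swalk {S : Set V} {x y : V} (w : SWalk G S x y) :
    SReach G S x y := by
  induction w with
  | nil hx => exact sreach_refl _
  | cons hx hadj w ih =>
    rename_i a b c
    exact sreach_trans (ReflTransGen.single ⟨hx, w.start_mem_S, hadj⟩) ih

lemma sreach_of_swalk_strong {S S' : Set V} {x y : V} (w : SWalk G S x y)
    (h : ∀ v ∈ w.support, v ∈ S') : SReach G S' x y := by
  induction w with
  | nil hx => exact sreach_refl _
  | cons hx hadj w ih =>
    rename_i a b c
    refine sreach_trans (ReflTransGen.single ?_) (ih ?_)
    · exact ⟨h a (SWalk.start_mem_support _),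
        h b (List.mem_cons_of_mem _ w.start_mem_support), hadj⟩
    · intro v hv
      exact h v (List.mem_cons_of_mem _ hv)

/-- Crossing lemma: a walk starting outside `κ` and meeting `κ` passes through
the boundary `B` of `κ` just before entering. -/
lemma swalk_cross {S κ B : Set V}
    (hclosed : ∀ u v, u ∈ κ → G.toSimple.Adj u v → v ∈ κ ∪ B) :
    ∀ {x y : V} (w : SWalk G S x y), x ∉ κ → ∀ c ∈ w.support, c ∈ κ →
    ∃ z ∈ B, ∃ w' : SWalk G S x z, w'.length + 1 ≤ w.length ∧
      ∀ v ∈ w'.support, v ∈ w.support := by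
  intro x y w
  induction w with
  | nil hx =>
    intro hxκ c hc hcκ
    rw [SWalk.support, List.mem_singleton] at hc
    subst hc
    exact absurd hcκ hxκ
  | cons hx hadj w ih =>
    rename_i a b c'
    intro hxκ c hc hcκ
    by_cases hbκ : b ∈ κ
    · have : a ∈ κ ∪ B := hclosed b a hbκ hadj.symm
      rcases this with h | h
      · exact absurd h hxκ
      · refine ⟨a, h, SWalk.nil hx, by simp [SWalk.length], fun v hv => ?_⟩
        rw [SWalk.support, List.mem_singleton] at hv
        subst hv
        exact SWalk.start_mem_support _
    · have hc' : c ∈ w.support := by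
        rw [SWalk.support, List.mem_cons] at hc
        rcases hc with rfl | hc
        · exact absurd hcκ hxκ
        · exact hc
      obtain ⟨z, hz, w', hlen, hsup⟩ := ih hbκ c hc' hcκ
      refine ⟨z, hz, SWalk.cons hx hadj w', by simp [SWalk.length]; omega, ?_⟩
      intro v hv
      rw [SWalk.support, List.mem_cons] at hv
      rcases hv with rfl | hv
      · exact SWalk.start_mem_support _
      · exact List.mem_cons_of_mem _ (hsup v hv)

end Walks

/-- `a` is in a pendant region relative to the edge `g`: some separating edge
`k ≠ g` cuts `a` off from the surviving ends of `g`. -/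
def Pend (G : LGraph V) (g : Sym2 V) (a : V) : Prop :=
  ∃ k, IsSepEdge G k ∧ k ≠ g ∧ a ∉ Ee k ∧
    ∀ s ∈ Ee g, s ∉ Ee k → ¬ SReach G (Ee k)ᶜ a s

/-- The candidate chunk attached to the edge `g` on the side of `x₀`. -/
def Tset (G : LGraph V) (g : Sym2 V) (x₀ : V) : Set V :=
  Ee g ∪ (SComp G (Ee g)ᶜ x₀ \ {a | Pend G g a})

section PendLemmas

set_option linter.unusedSectionVars false

variable {G : LGraph V}

lemma ends_adj (hG : IsCLTTF G) {g : Sym2 V} (hg : g ∈ G.edges) {c d : V}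
    (hc : c ∈ Ee g) (hd : d ∈ Ee g) (hne : c ≠ d) : G.toSimple.Adj c d := by
  obtain ⟨p, q, hpq, rfl⟩ := edge_repr hG hg
  rw [Ee_pair] at hc hd
  simp only [Set.mem_insert_iff, Set.mem_singleton_iff] at hc hd
  rcases hc with rfl | rfl <;> rcases hd with rfl | rfl
  · exact absurd rfl hne
  · exact adj_of_edge hG hg hne
  · exact (adj_of_edge hG hg (Ne.symm hne)).symm
  · exact absurd rfl hne

lemma other_end (hG : IsCLTTF G) {k : Sym2 V} (hk : k ∈ G.edges) {v : V}
    (hv : v ∈ Ee k) : ∃ u, u ≠ v ∧ k = s(u, v) := by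
  obtain ⟨c, d, hcd, rfl⟩ := edge_repr hG hk
  rw [Ee_pair] at hv
  simp only [Set.mem_insert_iff, Set.mem_singleton_iff] at hv
  rcases hv with rfl | rfl
  · exact ⟨d, Ne.symm hcd, Sym2.eq_swap⟩
  · exact ⟨c, hcd, rfl⟩

lemma pend_comp_inter_Eg {g : Sym2 V} {a : V} {k : Sym2 V}
    (hak : a ∉ Ee k)
    (hcond : ∀ s ∈ Ee g, s ∉ Ee k → ¬ SReach G (Ee k)ᶜ a s) :
    SComp G (Ee k)ᶜ a ∩ Ee g = ∅ := by
  by_contra h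
  rw [Set.eq_empty_iff_forall_notMem] at h
  push_neg at h
  obtain ⟨z, hzκ, hzg⟩ := h
  have hzk : z ∉ Ee k := scomp_subset (S := (Ee k)ᶜ) hak hzκ
  exact hcond z hzg hzk hzκ

lemma pend_comp_subset {g : Sym2 V} {x₀ a : V} {k : Sym2 V}
    (hag : a ∈ SComp G (Ee g)ᶜ x₀) (hak : a ∉ Ee k)
    (hcond : ∀ s ∈ Ee g, s ∉ Ee k → ¬ SReach G (Ee k)ᶜ a s) :
    SComp G (Ee k)ᶜ a ⊆ SComp G (Ee g)ᶜ x₀ := by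
  have hinter := pend_comp_inter_Eg hak hcond
  intro z hz
  have h1 : SReach G (SComp G (Ee k)ᶜ a) a z := sreach_in_scomp hz
  have h2 : SReach G (Ee g)ᶜ a z := by
    refine sreach_mono ?_ h1
    intro v hv
    intro hvg
    have : v ∈ SComp G (Ee k)ᶜ a ∩ Ee g := ⟨hv, hvg⟩
    rw [hinter] at this
    exact Set.notMem_empty v this
  exact sreach_trans hag h2

lemma comp_attach' (hG : IsCLTTF G) (hES : EdgeSeparated G) {k : Sym2 V}
    (hk : k ∈ G.edges) {a : V} (hak : a ∉ Ee k) {v : V} (hv : v ∈ Ee k) :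
    ∃ z ∈ SComp G (Ee k)ᶜ a, G.toSimple.Adj v z := by
  obtain ⟨u, hu, rfl⟩ := other_end hG hk hv
  have hvu : s(v, u) ∈ G.edges := by rwa [Sym2.eq_swap]
  have hak' : a ∉ Ee s(v, u) := by
    rwa [show s(v, u) = s(u, v) from Sym2.eq_swap]
  obtain ⟨z, hz, hadj⟩ := comp_attach (x := a) hG hES hvu hak'
  rw [show s(v, u) = s(u, v) from Sym2.eq_swap] at hz
  exact ⟨z, hz, hadj⟩

lemma pend_cut_ends (hG : IsCLTTF G) (hES : EdgeSeparated G) {g : Sym2 V}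
    {x₀ a : V} (hx₀ : x₀ ∉ Ee g) (hag : a ∈ SComp G (Ee g)ᶜ x₀) {k : Sym2 V}
    (hk : IsSepEdge G k) (hak : a ∉ Ee k)
    (hcond : ∀ s ∈ Ee g, s ∉ Ee k → ¬ SReach G (Ee k)ᶜ a s) :
    Ee k ⊆ SComp G (Ee g)ᶜ x₀ ∪ Ee g := by
  intro v hv
  by_cases hvg : v ∈ Ee g
  · exact Set.mem_union_right _ hvg
  · obtain ⟨z, hzκ, hadj⟩ := comp_attach' hG hES hk.1 hak hv
    have hzA : z ∈ SComp G (Ee g)ᶜ x₀ := pend_comp_subset hag hak hcond hzκ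
    exact Set.mem_union_left _ (scomp_closure hzA hvg hadj.symm (scomp_subset (S := (Ee g)ᶜ) hx₀ hzA))

/-- The set `Tset` is indecomposable. -/
lemma Tset_indec (hG : IsCLTTF G) {g : Sym2 V} (hg : g ∈ G.edges) (x₀ : V) :
    Indecomposable G (Tset G g x₀) := by
  refine indec_of_comps ?_
  intro k hk a haT b hbT haE hbE
  by_cases hkg : k = g
  · subst hkg
    have key : ∀ c ∈ Tset G k x₀, c ∉ Ee k → c ∈ SComp G (Ee k)ᶜ x₀ := by
      rintro c (hc | hc) hcE
      · exact absurd hc hcE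
      · exact hc.1
    have ha' := key a haT haE
    have hb' := key b hbT hbE
    exact sreach_trans (sreach_symm ha') hb'
  · obtain ⟨s₀, hs₀g, hs₀k⟩ := Ee_exists_not_mem hG hg (fun h => hkg h.symm)
    have hlink : ∀ s ∈ Ee g, s ∉ Ee k → SReach G (Ee k)ᶜ s s₀ := by
      intro s hs hsk
      by_cases hss : s = s₀
      · subst hss; exact sreach_refl _
      · exact ReflTransGen.single ⟨hsk, hs₀k, ends_adj hG hg hs hs₀g hss⟩
    have key : ∀ c ∈ Tset G g x₀, c ∉ Ee k → SReach G (Ee k)ᶜ c s₀ := by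
      rintro c (hc | hc) hcE
      · exact hlink c hc hcE
      · obtain ⟨hcA, hcP⟩ := hc
        rw [Set.mem_setOf_eq, Pend] at hcP
        push_neg at hcP
        obtain ⟨s, hsg, hsk, hreach⟩ := hcP k hk hkg hcE
        exact sreach_trans hreach (hlink s hsg hsk)
    exact sreach_trans (key a haT haE) (sreach_symm (key b hbT hbE))

/-- Boundary theorem: the end `w₂ ∉ Ee g` of a size-maximal pendant cut is not
itself in a pendant region. -/
lemma boundary_not_pend (hG : IsCLTTF G) (hES : EdgeSeparated G) {g : Sym2 V}
    (hg : g ∈ G.edges) {x₀ : V} (hx₀ : x₀ ∉ Ee g) {a : V}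
    (hag : a ∈ SComp G (Ee g)ᶜ x₀) {k : Sym2 V}
    (hk : IsSepEdge G k) (hkg : k ≠ g) (hak : a ∉ Ee k)
    (hcond : ∀ s ∈ Ee g, s ∉ Ee k → ¬ SReach G (Ee k)ᶜ a s)
    {w₂ : V} (hw₂ : w₂ ∈ Ee k) (hw₂g : w₂ ∉ Ee g)
    (hmax : ∀ k₃, IsSepEdge G k₃ → k₃ ≠ g → w₂ ∉ Ee k₃ →
      (∀ s ∈ Ee g, s ∉ Ee k₃ → ¬ SReach G (Ee k₃)ᶜ w₂ s) →
      ¬ (SComp G (Ee k)ᶜ a ⊂ SComp G (Ee k₃)ᶜ w₂)) :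
    ¬ Pend G g w₂ := by
  rintro ⟨k₃, hk₃, hk₃g, hw₂k₃, hcond₃⟩
  set κ := SComp G (Ee k)ᶜ a with hκdef
  have hκsub : κ ⊆ (Ee k)ᶜ := scomp_subset hak
  have hw₂κ : w₂ ∉ κ := fun h => (hκsub h) hw₂
  have hκg : κ ∩ Ee g = ∅ := pend_comp_inter_Eg hak hcond
  by_cases hcase : Ee k₃ ∩ κ = ∅
  · -- the pendant of `w₂` strictly contains `κ`
    refine hmax k₃ hk₃ hk₃g hw₂k₃ hcond₃ ?_
    have hκk₃ : ∀ z ∈ κ, z ∉ Ee k₃ := by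
      intro z hz hzk₃
      have : z ∈ Ee k₃ ∩ κ := ⟨hzk₃, hz⟩
      rw [hcase] at this
      exact Set.notMem_empty z this
    obtain ⟨z₀, hz₀κ, hadj⟩ := comp_attach' hG hES hk.1 hak hw₂
    have hsub : κ ⊆ SComp G (Ee k₃)ᶜ w₂ := by
      intro z hz
      have step1 : SReach G (Ee k₃)ᶜ w₂ z₀ :=
        ReflTransGen.single ⟨hw₂k₃, hκk₃ z₀ hz₀κ, hadj⟩
      have step2 : SReach G (Ee k₃)ᶜ z₀ z := by
        have h1 : SReach G κ z₀ z :=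
          sreach_trans (sreach_symm (sreach_in_scomp hz₀κ)) (sreach_in_scomp hz)
        exact sreach_mono (fun v hv => hκk₃ v hv) h1
      exact sreach_trans step1 step2
    refine ⟨hsub, fun h => ?_⟩
    exact hw₂κ (h (mem_scomp_self w₂))
  · -- the cut `k₃` has an endpoint inside `κ`
    rw [Set.eq_empty_iff_forall_notMem] at hcase
    push_neg at hcase
    obtain ⟨u₃, hu₃k₃, hu₃κ⟩ := hcase
    -- the other end of `k`
    obtain ⟨u, huw₂, hkeq⟩ := other_end hG hk.1 hw₂
    subst hkeq
    -- `Ee k₃ ⊆ κ ∪ {u}`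
    have hk₃sub : Ee k₃ ⊆ κ ∪ {u} := by
      intro v hv
      by_cases hvu₃ : v = u₃
      · exact Set.mem_union_left _ (hvu₃ ▸ hu₃κ)
      · have hadj : G.toSimple.Adj u₃ v := ends_adj hG hk₃.1 hu₃k₃ hv (Ne.symm hvu₃)
        by_cases hvk : v ∈ Ee s(u, w₂)
        · rw [Ee_pair] at hvk
          rcases hvk with rfl | rfl
          · exact Set.mem_union_right _ rfl
          · exact absurd hv hw₂k₃
        · exact Set.mem_union_left _ (scomp_closure hu₃κ hvk hadj (hκsub hu₃κ))
    -- survivor s₀ ∈ Ee g, s₀ ≠ u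
    obtain ⟨p', q', hp'q', hgeq⟩ := edge_repr hG hg
    have hs₀ : ∃ s₀ ∈ Ee g, s₀ ≠ u := by
      rw [hgeq, Ee_pair]
      by_cases hp'u : p' = u
      · exact ⟨q', Or.inr rfl, by rw [← hp'u]; exact Ne.symm hp'q'⟩
      · exact ⟨p', Or.inl rfl, hp'u⟩
    obtain ⟨s₀, hs₀g, hs₀u⟩ := hs₀
    have hs₀κ : s₀ ∉ κ := by
      intro h
      have : s₀ ∈ κ ∩ Ee g := ⟨h, hs₀g⟩
      rw [hκg] at this
      exact Set.notMem_empty s₀ this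
    have hs₀cu : s₀ ∉ κ ∪ {u} := by
      rintro (h | h)
      · exact hs₀κ h
      · exact hs₀u h
    have hw₂cu : w₂ ∉ κ ∪ {u} := by
      rintro (h | h)
      · exact hw₂κ h
      · exact huw₂ (Set.mem_singleton_iff.mp h).symm
    have hs₀k₃ : s₀ ∉ Ee k₃ := fun h => hs₀cu (hk₃sub h)
    have hreach : SReach G (Ee k₃)ᶜ w₂ s₀ :=
      same_comp_outside hG hES hk.1 hak hk₃sub hw₂cu hs₀cu
    exact hcond₃ s₀ hs₀g hs₀k₃ hreach

end PendLemmas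

section CoreT

set_option linter.unusedSectionVars false

variable {G : LGraph V}

/-- (C1): there is a non-pendant point in every component. -/
lemma exists_not_pend (hG : IsCLTTF G) (hES : EdgeSeparated G) {g : Sym2 V}
    (hg : g ∈ G.edges) {x₀ : V} (hx₀ : x₀ ∉ Ee g) :
    ∃ a ∈ SComp G (Ee g)ᶜ x₀, ¬ Pend G g a := by
  by_contra h
  push_neg at h
  set A := SComp G (Ee g)ᶜ x₀ with hA
  set P : Set (Sym2 V × V) := {pr | pr.2 ∈ A ∧ IsSepEdge G pr.1 ∧ pr.1 ≠ g ∧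
      pr.2 ∉ Ee pr.1 ∧
      ∀ s ∈ Ee g, s ∉ Ee pr.1 → ¬ SReach G (Ee pr.1)ᶜ pr.2 s} with hP
  have hPne : P.Nonempty := by
    have hx₀A : x₀ ∈ A := mem_scomp_self x₀
    obtain ⟨k, hk, hkg, hxk, hcond⟩ := h x₀ hx₀A
    exact ⟨(k, x₀), hx₀A, hk, hkg, hxk, hcond⟩
  obtain ⟨pr, hpr, hprmax⟩ := Set.Finite.exists_maximalFor
      (fun pr : Sym2 V × V => (SComp G (Ee pr.1)ᶜ pr.2).ncard) P (Set.toFinite P) hPne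
  obtain ⟨k, a⟩ := pr
  obtain ⟨haA, hk, hkg, hak, hcond⟩ := hpr
  obtain ⟨w₂, hw₂k, hw₂g⟩ := Ee_exists_not_mem hG hk.1 hkg
  have hw₂A : w₂ ∈ A := by
    rcases pend_cut_ends hG hES hx₀ haA hk hak hcond hw₂k with h' | h'
    · exact h'
    · exact absurd h' hw₂g
  have hnp : ¬ Pend G g w₂ := by
    refine boundary_not_pend hG hES hg hx₀ haA hk hkg hak hcond hw₂k hw₂g ?_
    intro k₃ hk₃ hk₃g hw₂k₃ hcond₃ hss
    have hmem : (k₃, w₂) ∈ P := ⟨hw₂A, hk₃, hk₃g, hw₂k₃, hcond₃⟩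
    have hcard : (SComp G (Ee k)ᶜ a).ncard < (SComp G (Ee k₃)ᶜ w₂).ncard :=
      Set.ncard_lt_ncard hss (Set.toFinite _)
    have := hprmax (j := (k₃, w₂)) hmem (le_of_lt hcard)
    simp only at this
    omega
  exact hnp (h w₂ hw₂A)

/-- Walk surgery: a walk from a non-pendant point of `A` to `p` can be replaced
by a walk avoiding all pendant regions. -/
lemma surgery (hG : IsCLTTF G) (hES : EdgeSeparated G) {p q : V}
    (hg : s(p, q) ∈ G.edges) {x₀ : V} (hx₀ : x₀ ∉ Ee s(p, q)) :
    ∀ n : ℕ, ∀ a : V, a ∈ SComp G (Ee s(p, q))ᶜ x₀ → ¬ Pend G s(p, q) a →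
    ∀ w : SWalk G (SComp G (Ee s(p, q))ᶜ x₀ ∪ {p}) a p, w.length ≤ n →
    SReach G (Tset G s(p, q) x₀) a p := by
  intro n
  induction n with
  | zero =>
    intro a haA hap w hw
    cases w with
    | nil hx => exact sreach_refl _
    | cons hx hadj w' => simp [SWalk.length] at hw
  | succ n ih =>
    intro a haA hap w hw
    by_cases hall : ∀ v ∈ w.support, ¬ Pend G s(p, q) v
    · refine sreach_of_swalk_strong w ?_
      intro v hv
      rcases w.support_subset v hv with hvA | hvp
      · exact Set.mem_union_right _ ⟨hvA, hall v hv⟩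
      · refine Set.mem_union_left _ ?_
        rw [Set.mem_singleton_iff.mp hvp, Ee_pair]
        exact Or.inl rfl
    · push_neg at hall
      obtain ⟨b, hbsup, hbP⟩ := hall
      obtain ⟨k, hk, hkg, hbk, hcond⟩ := hbP
      set κ := SComp G (Ee k)ᶜ b with hκ
      have hκEg : κ ∩ Ee s(p, q) = ∅ := pend_comp_inter_Eg hbk hcond
      have hpEe : p ∈ Ee s(p, q) := by rw [Ee_pair]; exact Or.inl rfl
      have hpκ : p ∉ κ := by
        intro hcontr
        have : p ∈ κ ∩ Ee s(p, q) := ⟨hcontr, hpEe⟩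
        rw [hκEg] at this
        exact Set.notMem_empty p this
      have haκ : a ∉ κ := by
        intro hcontr
        refine hap ⟨k, hk, hkg, fun h' => (scomp_subset (S := (Ee k)ᶜ) hbk hcontr) h', ?_⟩
        intro s hs hsk hreach
        exact hcond s hs hsk
          (sreach_trans (show SReach G (Ee k)ᶜ b a from hcontr) hreach)
      have hclosed : ∀ u v, u ∈ κ → G.toSimple.Adj u v → v ∈ κ ∪ Ee k := by
        intro u v huκ hadj
        by_cases hvk : v ∈ Ee k
        · exact Set.mem_union_right _ hvk
        · exact Set.mem_union_left _
            (scomp_closure huκ hvk hadj (scomp_subset (S := (Ee k)ᶜ) hbk huκ))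
      obtain ⟨w₁, w₂, hlen12, hs₁, hs₂⟩ := SWalk.splitAt w b hbsup
      obtain ⟨z₁, hz₁, w₁', hlen₁, hsup₁⟩ :=
        swalk_cross hclosed w₁ haκ b w₁.end_mem_support (mem_scomp_self b)
      obtain ⟨z₂, hz₂, w₂', hlen₂, hsup₂⟩ :=
        swalk_cross hclosed w₂.reverse hpκ b w₂.reverse.end_mem_support
          (mem_scomp_self b)
      have hlenrev : w₂.reverse.length = w₂.length := SWalk.length_reverse w₂
      by_cases hzz : z₁ = z₂
      · subst hzz
        refine ih a haA hap (w₁'.append w₂'.reverse) ?_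
        rw [SWalk.length_append, SWalk.length_reverse]
        omega
      · have hadj : G.toSimple.Adj z₁ z₂ := ends_adj hG hk.1 hz₁ hz₂ hzz
        have hz₁S : z₁ ∈ SComp G (Ee s(p, q))ᶜ x₀ ∪ {p} := w₁'.end_mem_S
        refine ih a haA hap (w₁'.append (SWalk.cons hz₁S hadj w₂'.reverse)) ?_
        rw [SWalk.length_append]
        simp only [SWalk.length]
        rw [SWalk.length_reverse]
        omega

lemma mem_Tset_left {g : Sym2 V} {x₀ v : V} (h : v ∈ Ee g) : v ∈ Tset G g x₀ :=
  Set.mem_union_left _ h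

lemma Tset_connfull (hG : IsCLTTF G) (hES : EdgeSeparated G) {p q : V}
    (hpq : p ≠ q) (hg : s(p, q) ∈ G.edges) {x₀ : V} (hx₀ : x₀ ∉ Ee s(p, q)) :
    ConnFull G (Tset G s(p, q) x₀) := by
  have hpT : p ∈ Tset G s(p, q) x₀ := mem_Tset_left (by rw [Ee_pair]; exact Or.inl rfl)
  have hqT : q ∈ Tset G s(p, q) x₀ := mem_Tset_left (by rw [Ee_pair]; exact Or.inr rfl)
  have key : ∀ c ∈ Tset G s(p, q) x₀, SReach G (Tset G s(p, q) x₀) c p := by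
    rintro c (hc | hc)
    · rw [Ee_pair] at hc
      rcases hc with rfl | rfl
      · exact sreach_refl _
      · exact ReflTransGen.single ⟨hqT, hpT, (adj_of_edge hG hg hpq).symm⟩
    · obtain ⟨hcA, hcP⟩ := hc
      obtain ⟨z, hzA, hadjz⟩ := comp_attach (x := x₀) hG hES hg hx₀
      have h1 : SReach G (SComp G (Ee s(p, q))ᶜ x₀) c z :=
        sreach_trans (sreach_symm (sreach_in_scomp hcA)) (sreach_in_scomp hzA)
      have h2 : SReach G (SComp G (Ee s(p, q))ᶜ x₀ ∪ {p}) c p :=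
        sreach_tail (sreach_mono Set.subset_union_left h1)
          (Set.mem_union_left _ hzA) (Set.mem_union_right _ rfl) hadjz.symm
      obtain ⟨w, -⟩ := swalk_of_sreach h2 (Set.mem_union_left _ hcA)
      exact surgery hG hES hg hx₀ w.length c hcA hcP w le_rfl
  refine connfull_of_sreach ⟨p, hpT⟩ ?_
  intro x hx y hy
  exact sreach_trans (key x hx) (sreach_symm (key y hy))

/-- The chunk attached to an edge `g` on the side of `x₀`. -/
lemma chunk_at (hG : IsCLTTF G) (hES : EdgeSeparated G) {g : Sym2 V}
    (hg : g ∈ G.edges) {x₀ : V} (hx₀ : x₀ ∉ Ee g) :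
    ∃ C, IsChunk G C ∧ Ee g ⊆ C ∧
      (SComp G (Ee g)ᶜ x₀ \ {a | Pend G g a}) ⊆ C ∧
      (C ∩ SComp G (Ee g)ᶜ x₀).Nonempty := by
  obtain ⟨p, q, hpq, rfl⟩ := edge_repr hG hg
  obtain ⟨C, hC, hsub⟩ :=
    exists_chunk (Tset_connfull hG hES hpq hg hx₀) (Tset_indec hG hg x₀)
  obtain ⟨a, haA, hanp⟩ := exists_not_pend hG hES hg hx₀
  refine ⟨C, hC, fun v hv => hsub (Set.mem_union_left _ hv),
    fun v hv => hsub (Set.mem_union_right _ hv), a, ?_, haA⟩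
  exact hsub (Set.mem_union_right _ ⟨haA, hanp⟩)

/-- A chunk containing a point outside a separating edge is confined to the
closure of the component of that point. -/
lemma chunk_confined (hG : IsCLTTF G) {C : Set V} (hC : IsChunk G C)
    {g : Sym2 V} (hgs : IsSepEdge G g) {x₀ : V} (hx₀C : x₀ ∈ C)
    (hx₀g : x₀ ∉ Ee g) : C ⊆ Ee g ∪ SComp G (Ee g)ᶜ x₀ := by
  intro v hv
  by_cases hvg : v ∈ Ee g
  · exact Set.mem_union_left _ hvg
  · exact Set.mem_union_right _ (comps_of_indec hG hC.2.1 hgs hx₀C hv hx₀g hvg)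

lemma exists_outside_pair (hV : 3 ≤ Fintype.card V) (p q : V) :
    ∃ x : V, x ≠ p ∧ x ≠ q := by
  have hcard : (Finset.univ \ {p, q} : Finset V).Nonempty := by
    rw [← Finset.card_pos]
    have h1 : ({p, q} : Finset V).card ≤ 2 := Finset.card_insert_le _ _ |>.trans (by simp)
    have h2 := Finset.card_sdiff_add_card_eq_card
      (show ({p, q} : Finset V) ⊆ Finset.univ from Finset.subset_univ _)
    have h3 : Finset.univ.card = Fintype.card V := rfl
    omega
  obtain ⟨x, hx⟩ := hcard
  rw [Finset.mem_sdiff, Finset.mem_insert, Finset.mem_singleton] at hx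
  push_neg at hx
  exact ⟨x, hx.2.1, hx.2.2⟩

/-- The two ends of an edge never form a chunk. -/
lemma Ee_not_chunk (hG : IsCLTTF G) (hES : EdgeSeparated G)
    (hV : 3 ≤ Fintype.card V) {g : Sym2 V} (hg : g ∈ G.edges) :
    ¬ IsChunk G (Ee g) := by
  intro hch
  obtain ⟨p, q, hpq, rfl⟩ := edge_repr hG hg
  obtain ⟨x₀, hx₀p, hx₀q⟩ := exists_outside_pair hV p q
  have hx₀ : x₀ ∉ Ee s(p, q) := by
    rw [Ee_pair]
    rintro (rfl | rfl)
    · exact hx₀p rfl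
    · exact hx₀q rfl
  obtain ⟨C, hC, hEC, hTC, a, haC, haA⟩ := chunk_at hG hES hg hx₀
  have heq := hch.2.2 C hC.1 hC.2.1 hEC
  have : a ∈ Ee s(p, q) := heq ▸ haC
  exact (scomp_subset (S := (Ee s(p, q))ᶜ) hx₀ haA) this

lemma chunk_diff_nonempty (hG : IsCLTTF G) (hES : EdgeSeparated G)
    (hV : 3 ≤ Fintype.card V) {C : Set V} (hC : IsChunk G C) {f : Sym2 V}
    (hf : f ∈ G.edges) : (C \ Ee f).Nonempty := by
  rw [Set.nonempty_iff_ne_empty]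
  intro h
  have hsub : C ⊆ Ee f := by
    intro v hv
    by_contra hvf
    exact Set.notMem_empty v (h ▸ ⟨hv, hvf⟩)
  have hEepair : ConnFull G (Ee f) := by
    obtain ⟨u, w, huw, rfl⟩ := edge_repr hG hf
    rw [Ee_pair]
    exact connfull_pair hG hf huw
  have hind : Indecomposable G (Ee f) := by
    obtain ⟨u, w, huw, rfl⟩ := edge_repr hG hf
    rw [Ee_pair]
    exact pair_indec hf
  have := hC.2.2 (Ee f) hEepair hind hsub
  exact Ee_not_chunk hG hES hV hf (this ▸ hC)

end CoreT

section Connectivity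

set_option linter.unusedSectionVars false

variable {G : LGraph V}

lemma chunk_adj_edge {C : Set V} (hC : IsChunk G C) {k : Sym2 V}
    (hk : IsSepEdge G k) (h : Ee k ⊆ C) :
    (chunkGraph G).Adj (Sum.inl ⟨C, hC⟩) (Sum.inr ⟨k, hk⟩) :=
  Or.inl ⟨⟨C, hC⟩, ⟨k, hk⟩, rfl, rfl, h⟩

/-- Any two separating edges through a common vertex `u` are connected in the
chunk graph. -/
lemma edges_reach (hG : IsCLTTF G) (hES : EdgeSeparated G)
    (hV : 3 ≤ Fintype.card V) :
    ∀ n : ℕ, ∀ u b w : V, ∀ hf : IsSepEdge G s(u, b), ∀ hk : IsSepEdge G s(u, w),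
    b ∉ Ee s(u, w) → (SComp G (Ee s(u, w))ᶜ b).ncard ≤ n →
    (chunkGraph G).Reachable (Sum.inr ⟨s(u, b), hf⟩) (Sum.inr ⟨s(u, w), hk⟩) := by
  intro n
  induction n using Nat.strong_induction_on with
  | _ n ih =>
    intro u b w hf hk hbk hn
    obtain ⟨C, hC, hEC, hTC, -⟩ := chunk_at hG hES hk.1 (x₀ := b) hbk
    by_cases hbC : b ∈ C
    · -- direct: C contains both edges
      have hfC : Ee s(u, b) ⊆ C := by
        rw [Ee_pair]
        rintro v (rfl | rfl)
        · exact hEC (by rw [Ee_pair]; exact Or.inl rfl)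
        · exact hbC
      exact ((chunk_adj_edge hC hf hfC).symm.reachable).trans
        (chunk_adj_edge hC hk hEC).reachable
    · -- b is pendant relative to s(u,w); take a maximal pendant witness
      have hbpend : Pend G s(u, w) b := by
        by_contra hnp
        exact hbC (hTC ⟨mem_scomp_self b, hnp⟩)
      set W : Set (Sym2 V) := {k' | IsSepEdge G k' ∧ k' ≠ s(u, w) ∧ b ∉ Ee k' ∧
        ∀ s ∈ Ee s(u, w), s ∉ Ee k' → ¬ SReach G (Ee k')ᶜ b s} with hW
      have hWne : W.Nonempty := by
        obtain ⟨k', h1, h2, h3, h4⟩ := hbpend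
        exact ⟨k', h1, h2, h3, h4⟩
      obtain ⟨k₂, hk₂W, hk₂max⟩ := Set.Finite.exists_maximalFor
        (fun k' => (SComp G (Ee k')ᶜ b).ncard) W (Set.toFinite W) hWne
      obtain ⟨hk₂, hk₂g, hbk₂, hcond₂⟩ := hk₂W
      -- u is an end of k₂
      have huk₂ : u ∈ Ee k₂ := by
        by_contra hu
        have huEg : u ∈ Ee s(u, w) := by rw [Ee_pair]; exact Or.inl rfl
        have hadj : G.toSimple.Adj b u := (adj_of_edge hG hf.1 (edge_ends_ne hG hf.1)).symm
        exact hcond₂ u huEg hu (ReflTransGen.single ⟨hbk₂, hu, hadj⟩)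
      obtain ⟨w₂, hw₂u, hk₂eq⟩ := other_end hG hk₂.1 huk₂
      have hk₂eq' : k₂ = s(u, w₂) := hk₂eq.trans Sym2.eq_swap
      subst hk₂eq'
      have hw₂k₂ : w₂ ∈ Ee s(u, w₂) := by rw [Ee_pair]; exact Or.inr rfl
      have hw₂g : w₂ ∉ Ee s(u, w) := by
        rw [Ee_pair]
        rintro (rfl | rfl)
        · exact hw₂u rfl
        · exact hk₂g rfl
      -- boundary theorem: w₂ is not pendant
      have hw₂np : ¬ Pend G s(u, w) w₂ := by
        refine boundary_not_pend hG hES hk.1 (x₀ := b) hbk (mem_scomp_self b)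
          hk₂ hk₂g hbk₂ hcond₂ hw₂k₂ hw₂g ?_
        intro k₃ hk₃ hk₃g hw₂k₃ hcond₃ hss
        have hbκ₃ : b ∈ SComp G (Ee k₃)ᶜ w₂ := hss.1 (mem_scomp_self b)
        have hcompeq : SComp G (Ee k₃)ᶜ b = SComp G (Ee k₃)ᶜ w₂ :=
          scomp_eq_of_mem hbκ₃
        have hk₃W : k₃ ∈ W := by
          refine ⟨hk₃, hk₃g, fun h' => (scomp_subset (S := (Ee k₃)ᶜ) hw₂k₃ hbκ₃) h', ?_⟩
        -- pendant condition transferred to b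
          intro s hs hsk₃ hr
          exact hcond₃ s hs hsk₃
            (sreach_trans (show SReach G (Ee k₃)ᶜ w₂ b from hbκ₃) hr)
        have hlt : (SComp G (Ee s(u, w₂))ᶜ b).ncard < (SComp G (Ee k₃)ᶜ b).ncard := by
          rw [hcompeq]
          exact Set.ncard_lt_ncard hss (Set.toFinite _)
        have := hk₂max (j := k₃) hk₃W (le_of_lt hlt)
        simp only at this
        omega
      -- w₂ lies in the component of b
      have hw₂A : w₂ ∈ SComp G (Ee s(u, w))ᶜ b := by
        rcases pend_cut_ends hG hES (x₀ := b) hbk (mem_scomp_self b) hk₂ hbk₂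
          hcond₂ hw₂k₂ with h' | h'
        · exact h'
        · exact absurd h' hw₂g
      -- hence w₂ ∈ C, so C contains the edge k₂ as well
      have hw₂C : w₂ ∈ C := hTC ⟨hw₂A, hw₂np⟩
      have hk₂C : Ee s(u, w₂) ⊆ C := by
        rw [Ee_pair]
        rintro v (rfl | rfl)
        · exact hEC (by rw [Ee_pair]; exact Or.inl rfl)
        · exact hw₂C
      -- recursion
      have hbk₂' : b ∉ Ee s(u, w₂) := hbk₂
      have hκ₂δ : SComp G (Ee s(u, w₂))ᶜ b ⊂ SComp G (Ee s(u, w))ᶜ b := by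
        constructor
        · exact pend_comp_subset (mem_scomp_self b) hbk₂ hcond₂
        · intro hsub
          exact (scomp_subset (S := (Ee s(u, w₂))ᶜ) hbk₂ (hsub hw₂A)) hw₂k₂
      have hcard : (SComp G (Ee s(u, w₂))ᶜ b).ncard < n :=
        lt_of_lt_of_le (Set.ncard_lt_ncard hκ₂δ (Set.toFinite _)) hn
      have hrec := ih _ hcard u b w₂ hf hk₂ hbk₂' le_rfl
      exact hrec.trans (((chunk_adj_edge hC hk₂ hk₂C).symm.reachable).trans
        (chunk_adj_edge hC hk hEC).reachable)

/-- Every chunk containing `u` (given some separating edge through `u`) reaches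
some separating edge through `u` in the chunk graph. -/
lemma chunk_to_edge (hG : IsCLTTF G) (hES : EdgeSeparated G)
    (hV : 3 ≤ Fintype.card V) :
    ∀ n : ℕ, ∀ C : Set V, ∀ hC : IsChunk G C, ∀ u ∈ C, ∀ f : Sym2 V,
    ∀ hfs : IsSepEdge G f, u ∈ Ee f →
    ∀ c₀ ∈ C, c₀ ∉ Ee f → (SComp G (Ee f)ᶜ c₀).ncard ≤ n →
    ∃ k, ∃ hk : IsSepEdge G k, u ∈ Ee k ∧
      (chunkGraph G).Reachable (Sum.inl ⟨C, hC⟩) (Sum.inr ⟨k, hk⟩) := by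
  intro n
  induction n using Nat.strong_induction_on with
  | _ n ih =>
    intro C hC u huC f hfs huf c₀ hc₀C hc₀f hn
    by_cases hEfC : Ee f ⊆ C
    · exact ⟨f, hfs, huf, (chunk_adj_edge hC hfs hEfC).reachable⟩
    · have hb'ex : ∃ b', b' ∈ Ee f ∧ b' ∉ C := by
        by_contra h
        push_neg at h
        exact hEfC h
      obtain ⟨b', hb'f, hb'C⟩ := hb'ex
      obtain ⟨c, hcu, hfeq⟩ := other_end hG hfs.1 huf
      have hb'c : b' = c := by
        rw [hfeq, Ee_pair] at hb'f
        rcases hb'f with rfl | rfl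
        · rfl
        · exact absurd huC hb'C
      subst hb'c
      -- neighbour of u in C
      obtain ⟨d, hdC, hadjud⟩ := chunk_nbr hG hV hC huC
      have hdu : d ≠ u := (hadjud.ne).symm
      have hdf : d ∉ Ee f := by
        rw [hfeq, Ee_pair]
        rintro (rfl | rfl)
        · exact hb'C hdC
        · exact hdu rfl
      have hdα : d ∈ SComp G (Ee f)ᶜ c₀ :=
        comps_of_indec hG hC.2.1 hfs hc₀C hdC hc₀f hdf
      by_cases hdP : Pend G f d
      · -- recurse into the pendant of d
        obtain ⟨kd, hkd, hkdf, hdkd, hcondd⟩ := hdP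
        have hukd : u ∈ Ee kd := by
          by_contra hu
          exact hcondd u huf hu (ReflTransGen.single ⟨hdkd, hu, hadjud.symm⟩)
        obtain ⟨wd, hwdu, hkdeq⟩ := other_end hG hkd.1 hukd
        by_cases hwdC : wd ∈ C
        · refine ⟨kd, hkd, hukd, (chunk_adj_edge hC hkd ?_).reachable⟩
          rw [hkdeq, Ee_pair]
          rintro v (rfl | rfl)
          · exact hwdC
          · exact huC
        · -- wd ∉ C : strictly smaller component
          have hwdf : wd ∉ Ee f := by
            intro hw
            rw [hfeq, Ee_pair] at hw
            rcases hw with rfl | rfl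
            · exact hkdf (hkdeq.trans (by rw [hfeq]))
            · exact hwdu rfl
          have hwdα : wd ∈ SComp G (Ee f)ᶜ c₀ := by
            have hends := pend_cut_ends hG hES (x₀ := c₀) hc₀f hdα hkd hdkd hcondd
            have hwdkd : wd ∈ Ee kd := by rw [hkdeq, Ee_pair]; exact Or.inl rfl
            rcases hends hwdkd with h' | h'
            · exact h'
            · exact absurd h' hwdf
          have hwdκ : wd ∉ SComp G (Ee kd)ᶜ d := by
            intro h'
            exact (scomp_subset (S := (Ee kd)ᶜ) hdkd h')
              (by rw [hkdeq, Ee_pair]; exact Or.inl rfl)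
          have hss : SComp G (Ee kd)ᶜ d ⊂ SComp G (Ee f)ᶜ c₀ := by
            constructor
            · intro z hz
              have h1 : SComp G (Ee kd)ᶜ d ⊆ SComp G (Ee f)ᶜ d :=
                pend_comp_subset (x₀ := d) (mem_scomp_self d) hdkd hcondd
              have h2 := h1 hz
              have : SComp G (Ee f)ᶜ d = SComp G (Ee f)ᶜ c₀ := scomp_eq_of_mem hdα
              rwa [this] at h2
            · intro hsub
              exact hwdκ (hsub hwdα)
          have hcard : (SComp G (Ee kd)ᶜ d).ncard < n :=
            lt_of_lt_of_le (Set.ncard_lt_ncard hss (Set.toFinite _)) hn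
          exact ih _ hcard C hC u huC kd hkd hukd d hdC hdkd le_rfl
      · -- d is not pendant: it lies in the chunk attached to f on this side
        obtain ⟨E, hE, hEfE, hTE, -⟩ := chunk_at hG hES hfs.1 (x₀ := c₀) hc₀f
        have hdE : d ∈ E := hTE ⟨hdα, hdP⟩
        have hCE : C ≠ E := by
          intro h
          exact hb'C (h ▸ hEfE (by rw [hfeq, Ee_pair]; exact Or.inl rfl))
        have hcap : (C ∩ E).Nonempty := ⟨u, huC, hEfE huf⟩
        obtain ⟨k, S₁, S₂, hks, hdk, hCS₁, hES₂, hcapk⟩ :=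
          chunks_meet hG hC hE hCE hcap
        have huk : u ∈ Ee k := hcapk ⟨huC, hEfE huf⟩
        have hdk' : d ∈ Ee k := hcapk ⟨hdC, hdE⟩
        obtain ⟨c', hc'u, hkeq⟩ := other_end hG hks.1 huk
        have hdc' : d = c' := by
          rw [hkeq, Ee_pair] at hdk'
          rcases hdk' with rfl | rfl
          · rfl
          · exact absurd rfl hdu
        refine ⟨k, hks, huk, (chunk_adj_edge hC hks ?_).reachable⟩
        rw [hkeq, Ee_pair]
        rintro v (rfl | rfl)
        · rw [← hdc']; exact hdC
        · exact huC

end Connectivity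

section Connected

set_option linter.unusedSectionVars false

variable {G : LGraph V}

lemma chunks_shared (hG : IsCLTTF G) (hES : EdgeSeparated G)
    (hV : 3 ≤ Fintype.card V) {C D : Set V} (hC : IsChunk G C) (hD : IsChunk G D)
    {u : V} (huC : u ∈ C) (huD : u ∈ D) :
    (chunkGraph G).Reachable (Sum.inl ⟨C, hC⟩) (Sum.inl ⟨D, hD⟩) := by
  by_cases hCD : C = D
  · subst hCD
    rfl
  · obtain ⟨k₀, S₁, S₂, hk₀, -, -, -, hcapk₀⟩ := chunks_meet hG hC hD hCD ⟨u, huC, huD⟩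
    have huk₀ : u ∈ Ee k₀ := hcapk₀ ⟨huC, huD⟩
    obtain ⟨cC, hcC⟩ := chunk_diff_nonempty hG hES hV hC hk₀.1
    obtain ⟨cD, hcD⟩ := chunk_diff_nonempty hG hES hV hD hk₀.1
    obtain ⟨kC, hkC, hukC, hreachC⟩ := chunk_to_edge hG hES hV
      (SComp G (Ee k₀)ᶜ cC).ncard C hC u huC k₀ hk₀ huk₀ cC hcC.1 hcC.2 le_rfl
    obtain ⟨kD, hkD, hukD, hreachD⟩ := chunk_to_edge hG hES hV
      (SComp G (Ee k₀)ᶜ cD).ncard D hD u huD k₀ hk₀ huk₀ cD hcD.1 hcD.2 le_rfl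
    by_cases hkk : kC = kD
    · have heq : (⟨kC, hkC⟩ : {e : Sym2 V // IsSepEdge G e}) = ⟨kD, hkD⟩ :=
        Subtype.ext hkk
      rw [heq] at hreachC
      exact hreachC.trans hreachD.symm
    · obtain ⟨c', hc'u, hkCeq⟩ := other_end hG hkC.1 hukC
      obtain ⟨d', hd'u, hkDeq⟩ := other_end hG hkD.1 hukD
      have hkCeq' : kC = s(u, c') := hkCeq.trans Sym2.eq_swap
      have hkDeq' : kD = s(u, d') := hkDeq.trans Sym2.eq_swap
      subst hkCeq'
      subst hkDeq'
      have hcd : c' ≠ d' := fun h => hkk (by rw [h])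
      have hc'd : c' ∉ Ee s(u, d') := by
        rw [Ee_pair]
        rintro (rfl | rfl)
        · exact hc'u rfl
        · exact hcd rfl
      have hmid := edges_reach hG hES hV (SComp G (Ee s(u, d'))ᶜ c').ncard
        u c' d' hkC hkD hc'd le_rfl
      exact hreachC.trans (hmid.trans hreachD.symm)

lemma edge_to_chunk (hG : IsCLTTF G) {k : Sym2 V} (hk : IsSepEdge G k) :
    ∃ C, ∃ hC : IsChunk G C,
      (chunkGraph G).Adj (Sum.inr ⟨k, hk⟩) (Sum.inl ⟨C, hC⟩) := by
  obtain ⟨uu, ww, huw, hkeq⟩ := edge_repr hG hk.1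
  obtain ⟨C, hC, h1, h2⟩ := chunk_of_edge hG (hkeq ▸ hk.1)
  refine ⟨C, hC, Or.inr ⟨⟨C, hC⟩, ⟨k, hk⟩, rfl, rfl, ?_⟩⟩
  intro v hv
  have hv' : v ∈ k := hv
  rw [hkeq, Sym2.mem_iff] at hv'
  rcases hv' with rfl | rfl
  · exact h1
  · exact h2

lemma chunks_all_reach (hG : IsCLTTF G) (hES : EdgeSeparated G)
    (hV : 3 ≤ Fintype.card V) (C D : Set V) (hC : IsChunk G C) (hD : IsChunk G D) :
    (chunkGraph G).Reachable (Sum.inl ⟨C, hC⟩) (Sum.inl ⟨D, hD⟩) := by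
  obtain ⟨c, hc⟩ := connfull_nonempty hC.1
  obtain ⟨d, hd⟩ := connfull_nonempty hD.1
  have hreach := hG.connected.preconnected c d
  rw [SimpleGraph.reachable_iff_reflTransGen] at hreach
  have key : ∀ a d : V, ReflTransGen G.toSimple.Adj a d →
      ∀ (C : Set V) (hC : IsChunk G C), a ∈ C →
      (chunkGraph G).Reachable (Sum.inl ⟨C, hC⟩) (Sum.inl ⟨D, hD⟩) → True := by
    exact fun _ _ _ _ _ _ _ => trivial
  clear key
  have main : ∀ a : V, ReflTransGen G.toSimple.Adj a d →
      ∀ (C' : Set V) (hC' : IsChunk G C'), a ∈ C' → ∀ (D' : Set V)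
      (hD' : IsChunk G D'), d ∈ D' →
      (chunkGraph G).Reachable (Sum.inl ⟨C', hC'⟩) (Sum.inl ⟨D', hD'⟩) := by
    intro a h
    induction h using Relation.ReflTransGen.head_induction_on with
    | refl =>
      intro C' hC' hcC D' hD' hdD
      exact chunks_shared hG hES hV hC' hD' hcC hdD
    | head hstep htail ih =>
      rename_i a₁ a₂
      intro C' hC' haC D' hD' hdD
      obtain ⟨K, hK, haK, ha'K⟩ := chunk_of_edge hG hstep.2
      exact (chunks_shared hG hES hV hC' hK haC haK).trans (ih K hK ha'K D' hD' hdD)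
  exact main c hreach C hC hc D hD hd

lemma chunk_exists (hG : IsCLTTF G) (hV : 3 ≤ Fintype.card V) :
    ∃ C, IsChunk G C := by
  have : Nonempty V := by
    rw [← Fintype.card_pos_iff]
    omega
  obtain ⟨x⟩ := this
  obtain ⟨z, hz⟩ := exists_adj hG hV x
  obtain ⟨C, hC, -, -⟩ := chunk_of_edge hG hz.2
  exact ⟨C, hC⟩

lemma chunkGraph_connected (hG : IsCLTTF G) (hES : EdgeSeparated G)
    (hV : 3 ≤ Fintype.card V) : (chunkGraph G).Connected := by
  obtain ⟨C₀, hC₀⟩ := chunk_exists hG hV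
  have : Nonempty (ChunkVert G) := ⟨Sum.inl ⟨C₀, hC₀⟩⟩
  refine ⟨fun x y => ?_⟩
  have key : ∀ z : ChunkVert G, ∃ (D : Set V) (hD : IsChunk G D),
      (chunkGraph G).Reachable z (Sum.inl ⟨D, hD⟩) := by
    intro z
    match z with
    | Sum.inl ⟨D, hD⟩ => exact ⟨D, hD, SimpleGraph.Reachable.refl _⟩
    | Sum.inr ⟨k, hk⟩ =>
      obtain ⟨D, hD, hadj⟩ := edge_to_chunk hG hk
      exact ⟨D, hD, hadj.reachable⟩
  obtain ⟨Dx, hDx, hx⟩ := key x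
  obtain ⟨Dy, hDy, hy⟩ := key y
  exact (hx.trans (chunks_all_reach hG hES hV Dx Dy hDx hDy)).trans hy.symm

end Connected

section Acyclic

set_option linter.unusedSectionVars false

variable {G : LGraph V}

/-- The anchor set of a chunk-graph vertex. -/
def Fv (G : LGraph V) : ChunkVert G → Set V :=
  Sum.elim (fun Cs => Cs.1) (fun ks => Ee ks.1)

lemma anchor_equiv (hG : IsCLTTF G) {f : Sym2 V} (hf : IsSepEdge G f)
    {z : ChunkVert G} (hz : z ≠ Sum.inr ⟨f, hf⟩) {a b : V}
    (ha : a ∈ Fv G z) (hb : b ∈ Fv G z) (haf : a ∉ Ee f) (hbf : b ∉ Ee f) :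
    SReach G (Ee f)ᶜ a b := by
  match z with
  | Sum.inl ⟨D, hD⟩ =>
    exact comps_of_indec hG hD.2.1 hf ha hb haf hbf
  | Sum.inr ⟨k, hk⟩ =>
    have hkf : k ≠ f := by
      intro h
      exact hz (by subst h; rfl)
    by_cases hab : a = b
    · subst hab; exact sreach_refl _
    · exact ReflTransGen.single ⟨haf, hbf, ends_adj hG hk.1 ha hb hab⟩

lemma anchor_nonempty (hG : IsCLTTF G) (hES : EdgeSeparated G)
    (hV : 3 ≤ Fintype.card V) {f : Sym2 V} (hf : IsSepEdge G f)
    {z : ChunkVert G} (hz : z ≠ Sum.inr ⟨f, hf⟩) :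
    ∃ a, a ∈ Fv G z ∧ a ∉ Ee f := by
  match z with
  | Sum.inl ⟨D, hD⟩ =>
    obtain ⟨a, ha⟩ := chunk_diff_nonempty hG hES hV hD hf.1
    exact ⟨a, ha.1, ha.2⟩
  | Sum.inr ⟨k, hk⟩ =>
    have hkf : k ≠ f := by
      intro h
      exact hz (by subst h; rfl)
    obtain ⟨a, ha1, ha2⟩ := Ee_exists_not_mem hG hk.1 hkf
    exact ⟨a, ha1, ha2⟩

lemma acyc_key (hG : IsCLTTF G) (hES : EdgeSeparated G) (hV : 3 ≤ Fintype.card V)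
    {C : Set V} (hC : IsChunk G C) {f : Sym2 V} (hf : IsSepEdge G f)
    (hfC : Ee f ⊆ C) :
    ¬ ((chunkGraph G) \ SimpleGraph.fromEdgeSet
        {s((Sum.inr ⟨f, hf⟩ : ChunkVert G), Sum.inl ⟨C, hC⟩)}).Reachable
      (Sum.inr ⟨f, hf⟩) (Sum.inl ⟨C, hC⟩) := by
  intro hreach
  obtain ⟨c₀, hc₀C, hc₀f⟩ := chunk_diff_nonempty hG hES hV hC hf.1
  set fv : ChunkVert G := Sum.inr ⟨f, hf⟩ with hfv
  set Cv : ChunkVert G := Sum.inl ⟨C, hC⟩ with hCv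
  set G' := (chunkGraph G) \ SimpleGraph.fromEdgeSet {s(fv, Cv)} with hG'
  -- the invariant
  set Good : ChunkVert G → Prop := fun z =>
    z = fv ∨ ∃ a, a ∈ Fv G z ∧ a ∉ Ee f ∧ ¬ SReach G (Ee f)ᶜ a c₀ with hGood
  have hstep : ∀ z z', Good z → G'.Adj z z' → Good z' := by
    intro z z' hz hadj
    obtain ⟨hadj₀, hdel⟩ := hadj
    by_cases hz'f : z' = fv
    · exact Or.inl hz'f
    · rcases hz with rfl | ⟨a, haF, haf, hanr⟩
      · -- step away from fv: z' is a chunk containing f, distinct from C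
        rcases hadj₀ with ⟨Cs, es, hzeq, hz'eq, hsub⟩ | ⟨Cs, es, hzeq, hz'eq, hsub⟩
        · exact absurd hzeq (by simp [hfv])
        · -- z = inr es, z' = inl Cs
          have hes : es = ⟨f, hf⟩ := by
            rw [hfv] at hzeq
            exact Sum.inr.inj hzeq.symm
          subst hes
          have hDC : Cs ≠ ⟨C, hC⟩ := by
            intro h
            apply hdel
            rw [SimpleGraph.fromEdgeSet_adj]
            constructor
            · rw [hzeq, hz'eq, h]
              exact Set.mem_singleton _
            · rw [hzeq, hz'eq]
              simp
          obtain ⟨D, hD⟩ := Cs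
          have hfD : Ee f ⊆ D := hsub
          obtain ⟨a, haD, haf⟩ := anchor_nonempty hG hES hV hf (z := z') hz'f
          refine Or.inr ⟨a, haD, haf, fun hr => ?_⟩
          rw [hz'eq] at haD
          have : D = C := side_unique hG hD hC hf hfD hfC haD haf hc₀C hc₀f hr
          exact hDC (Subtype.ext this)
      · -- generic step
        have hzf : z ≠ fv := by
          intro h
          rw [h] at haF
          exact haf haF
        -- the shared anchor point
        have hshared : ∃ t, t ∈ Fv G z ∧ t ∈ Fv G z' ∧ t ∉ Ee f := by
          rcases hadj₀ with ⟨Cs, es, hzeq, hz'eq, hsub⟩ | ⟨Cs, es, hzeq, hz'eq, hsub⟩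
          · -- z = inl Cs, z' = inr es
            have hesf : es.1 ≠ f := by
              intro h
              exact hz'f (by rw [hz'eq, hfv]; congr 1; exact Subtype.ext h)
            obtain ⟨t, ht1, ht2⟩ := Ee_exists_not_mem hG es.2.1 hesf
            refine ⟨t, ?_, ?_, ht2⟩
            · rw [hzeq]; exact hsub ht1
            · rw [hz'eq]; exact ht1
          · -- z = inr es, z' = inl Cs
            have hesf : es.1 ≠ f := by
              intro h
              exact hzf (by rw [hzeq, hfv]; congr 1; exact Subtype.ext h)
            obtain ⟨t, ht1, ht2⟩ := Ee_exists_not_mem hG es.2.1 hesf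
            refine ⟨t, ?_, ?_, ht2⟩
            · rw [hzeq]; exact ht1
            · rw [hz'eq]; exact hsub ht1
        obtain ⟨t, htz, htz', htf⟩ := hshared
        have hat : SReach G (Ee f)ᶜ a t := anchor_equiv hG hf hzf haF htz haf htf
        refine Or.inr ⟨t, htz', htf, fun hr => ?_⟩
        exact hanr (sreach_trans hat hr)
  -- run the invariant along the walk
  rw [SimpleGraph.reachable_iff_reflTransGen] at hreach
  have hGoodAll : ∀ z, ReflTransGen G'.Adj fv z → Good z := by
    intro z h
    induction h with
    | refl => exact Or.inl rfl
    | tail hab hbc ih => exact hstep _ _ ih hbc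
  have hGoodEnd : Good Cv := hGoodAll Cv hreach
  rcases hGoodEnd with h | ⟨a, haF, haf, hanr⟩
  · rw [hCv, hfv] at h
    exact absurd h (by simp)
  · have haC : a ∈ C := haF
    exact hanr (comps_of_indec hG hC.2.1 hf haC hc₀C haf hc₀f)

lemma chunkGraph_acyclic (hG : IsCLTTF G) (hES : EdgeSeparated G)
    (hV : 3 ≤ Fintype.card V) : (chunkGraph G).IsAcyclic := by
  rw [SimpleGraph.isAcyclic_iff_forall_adj_isBridge]
  intro x y hadj
  rw [SimpleGraph.isBridge_iff]
  rcases hadj with ⟨Cs, es, hxeq, hyeq, hsub⟩ | ⟨Cs, es, hxeq, hyeq, hsub⟩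
  · subst hxeq; subst hyeq
    intro hr
    have := acyc_key hG hES hV Cs.2 es.2 hsub
    apply this
    rw [show s((Sum.inr es : ChunkVert G), Sum.inl Cs) =
        s((Sum.inl Cs : ChunkVert G), Sum.inr es) from Sym2.eq_swap]
    exact hr.symm
  · subst hxeq; subst hyeq
    intro hr
    exact acyc_key hG hES hV Cs.2 es.2 hsub hr

end Acyclic

section Leaves

set_option linter.unusedSectionVars false

variable {G : LGraph V}

/-- A separating edge has at least two chunk neighbours in the chunk graph. -/
lemma sep_edge_two_chunks (hG : IsCLTTF G) (hES : EdgeSeparated G)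
    (hV : 3 ≤ Fintype.card V) {e : Sym2 V} (he : IsSepEdge G e) :
    ∃ (C₁ C₂ : Set V) (hC₁ : IsChunk G C₁) (hC₂ : IsChunk G C₂),
      C₁ ≠ C₂ ∧ Ee e ⊆ C₁ ∧ Ee e ⊆ C₂ := by
  obtain ⟨heE, S₁, S₂, hd⟩ := he
  have hd' : IsDecomp G (Ee e) S₁ S₂ := hd
  have hS₀₁ : Ee e ⊆ S₁ := by
    intro v hv
    have : v ∈ S₁ ∩ S₂ := by rw [hd'.inter_eq]; exact hv
    exact this.1
  have hS₀₂ : Ee e ⊆ S₂ := by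
    intro v hv
    have : v ∈ S₁ ∩ S₂ := by rw [hd'.inter_eq]; exact hv
    exact this.2
  have hx₁ : ∃ x₁, x₁ ∈ S₁ ∧ x₁ ∉ Ee e := by
    by_contra h
    push_neg at h
    exact hd'.ne₁ (Set.Subset.antisymm h hS₀₁)
  have hx₂ : ∃ x₂, x₂ ∈ S₂ ∧ x₂ ∉ Ee e := by
    by_contra h
    push_neg at h
    exact hd'.ne₂ (Set.Subset.antisymm h hS₀₂)
  obtain ⟨x₁, hx₁S, hx₁e⟩ := hx₁
  obtain ⟨x₂, hx₂S, hx₂e⟩ := hx₂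
  have hsep2 : ¬ SReach G (Ee e)ᶜ x₁ x₂ := decomp_separates hd' hx₁S hx₁e hx₂S hx₂e
  obtain ⟨C₁, hC₁, hEC₁, -, a₁, ha₁C, ha₁A⟩ := chunk_at hG hES heE (x₀ := x₁) hx₁e
  obtain ⟨C₂, hC₂, hEC₂, -, a₂, ha₂C, ha₂A⟩ := chunk_at hG hES heE (x₀ := x₂) hx₂e
  refine ⟨C₁, C₂, hC₁, hC₂, ?_, hEC₁, hEC₂⟩
  intro hCC
  have ha₁e : a₁ ∉ Ee e := scomp_subset (S := (Ee e)ᶜ) hx₁e ha₁A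
  have ha₂e : a₂ ∉ Ee e := scomp_subset (S := (Ee e)ᶜ) hx₂e ha₂A
  have h12 : SReach G (Ee e)ᶜ a₁ a₂ :=
    comps_of_indec hG hC₁.2.1 ⟨heE, S₁, S₂, hd⟩ ha₁C (hCC ▸ ha₂C) ha₁e ha₂e
  exact hsep2 (sreach_trans ha₁A (sreach_trans h12 (sreach_symm ha₂A)))

lemma leaf_is_chunk (hG : IsCLTTF G) (hES : EdgeSeparated G)
    (hV : 3 ≤ Fintype.card V) (x : ChunkVert G)
    (hx : ∃! y : ChunkVert G, (chunkGraph G).Adj x y) :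
    ∃ C : {S : Set V // IsChunk G S}, x = Sum.inl C := by
  match x with
  | Sum.inl C => exact ⟨C, rfl⟩
  | Sum.inr ⟨e, he⟩ =>
    exfalso
    obtain ⟨C₁, C₂, hC₁, hC₂, hne, hE₁, hE₂⟩ := sep_edge_two_chunks hG hES hV he
    obtain ⟨y, -, hyuniq⟩ := hx
    have h₁ : (chunkGraph G).Adj (Sum.inr ⟨e, he⟩) (Sum.inl ⟨C₁, hC₁⟩) :=
      Or.inr ⟨⟨C₁, hC₁⟩, ⟨e, he⟩, rfl, rfl, hE₁⟩
    have h₂ : (chunkGraph G).Adj (Sum.inr ⟨e, he⟩) (Sum.inl ⟨C₂, hC₂⟩) :=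
      Or.inr ⟨⟨C₂, hC₂⟩, ⟨e, he⟩, rfl, rfl, hE₂⟩
    have e₁ := hyuniq _ h₁
    have e₂ := hyuniq _ h₂
    rw [← e₂] at e₁
    have : (⟨C₁, hC₁⟩ : {S : Set V // IsChunk G S}) = ⟨C₂, hC₂⟩ := Sum.inl.inj e₁
    exact hne (congrArg Subtype.val this)

end Leaves

end Stmt0

theorem stmt0 (hV : 3 ≤ Fintype.card V) (G : LGraph V)
    (hG : IsCLTTF G) (hES : EdgeSeparated G) :
    (chunkGraph G).IsTree ∧
      ∀ x : ChunkVert G, (∃! y : ChunkVert G, (chunkGraph G).Adj x y) →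
        ∃ C : {S : Set V // IsChunk G S}, x = Sum.inl C := by
  constructor
  · exact ⟨Stmt0.chunkGraph_connected hG hES hV, Stmt0.chunkGraph_acyclic hG hES hV⟩
  · exact Stmt0.leaf_is_chunk hG hES hV

end CLTTF
end

section
/- Let Γ be an edge-separated CLTTF graph that is both rigid and discretely rigid. Then the label m(e) is even for every separating edge e of Γ. -/
open scoped Classical

namespace CLTTF

variable {V : Type} [Fintype V] [DecidableEq V]

lemma walk_closed {W : Type} {H : SimpleGraph W} {S : Set W}
    (hS : ∀ a ∈ S, ∀ b, H.Adj a b → b ∈ S) {u v : W} (w : H.Walk u v) (hu : u ∈ S) :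
    v ∈ S := by
  induction w with
  | nil => exact hu
  | cons h p ih => exact ih (hS _ hu _ h)

lemma twMap_vs {s t v : V} {S₂ : Set V} (hv : v ∈ S₂) (hvs : v ≠ s) (hvt : v ≠ t) :
    twMap s t S₂ s(v, s) = s(v, t) := by
  unfold twMap
  have h : ∃ u, u ∈ S₂ ∧ u ≠ s ∧ u ≠ t ∧ s(v, s) = s(u, s) := ⟨v, hv, hvs, hvt, rfl⟩
  rw [dif_pos h]
  obtain ⟨hu1, hus, hut, heq⟩ := h.choose_spec
  rcases Sym2.eq_iff.mp heq with ⟨h1, h2⟩ | ⟨h1, h2⟩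
  · rw [← h1]
  · exact absurd h1 hvs

lemma twMap_vt {s t v : V} {S₂ : Set V} (hst : s ≠ t) (hv : v ∈ S₂) (hvs : v ≠ s)
    (hvt : v ≠ t) : twMap s t S₂ s(v, t) = s(v, s) := by
  unfold twMap
  have h1 : ¬ ∃ u, u ∈ S₂ ∧ u ≠ s ∧ u ≠ t ∧ s(v, t) = s(u, s) := by
    rintro ⟨u, hu, hus, hut, heq⟩
    rcases Sym2.eq_iff.mp heq with ⟨ha, hb⟩ | ⟨ha, hb⟩
    · exact hst hb.symm
    · exact hut hb.symm
  rw [dif_neg h1]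
  have h2 : ∃ u, u ∈ S₂ ∧ u ≠ s ∧ u ≠ t ∧ s(v, t) = s(u, t) := ⟨v, hv, hvs, hvt, rfl⟩
  rw [dif_pos h2]
  obtain ⟨hu1, hus, hut, heq⟩ := h2.choose_spec
  rcases Sym2.eq_iff.mp heq with ⟨ha, hb⟩ | ⟨ha, hb⟩
  · rw [← ha]
  · exact absurd ha hvt

theorem stmt5 (hV : 3 ≤ Fintype.card V) (G : LGraph V)
    (hG : IsCLTTF G) (hES : EdgeSeparated G)
    (h1 : Rigid G) (h2 : DiscretelyRigid G) :
    ∀ e : Sym2 V, IsSepEdge G e → Even (G.label e) := by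
  intro e
  induction e using Sym2.ind with
  | _ s t =>
    rintro ⟨heE, S₁, S₂, hdec⟩
    by_contra hodd
    have hst : s ≠ t := by
      have := hG.good.1 _ heE
      simpa [Sym2.mk_isDiag_iff] using this
    have hset : ({v | v ∈ s(s, t)} : Set V) = ({s, t} : Set V) := by
      ext v; simp [Sym2.mem_iff]
    -- the twist is twist-equivalent to G
    have hTE : TwistEquiv G (G.twist s t S₂) :=
      Relation.ReflTransGen.single ⟨s, t, S₁, S₂, heE, hset ▸ hdec, rfl⟩
    have hΔ : G.twist s t S₂ = G := h2 _ hTE (h1 _ hTE)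
    have hEdges : twMap s t S₂ '' G.edges = G.edges := by
      have h' := hΔ
      unfold LGraph.twist at h'
      rw [if_neg hodd] at h'
      exact congrArg LGraph.edges h'
    -- no vertex of S₂ \ {s,t} is adjacent to s or t
    have key : ∀ v ∈ S₂, v ≠ s → v ≠ t → s(v, s) ∉ G.edges ∧ s(v, t) ∉ G.edges := by
      intro v hv hvs hvt
      have tri : s(v, s) ∈ G.edges → s(v, t) ∈ G.edges → False := by
        intro h1' h2'
        refine hG.triangle_free {v, s, t} ?_
        rw [SimpleGraph.is3Clique_triple_iff]
        exact ⟨⟨hvs, h1'⟩, ⟨hvt, h2'⟩, ⟨hst, heE⟩⟩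
      constructor
      · intro h1'
        have : s(v, t) ∈ G.edges := by
          rw [← hEdges]
          exact ⟨s(v, s), h1', twMap_vs hv hvs hvt⟩
        exact tri h1' this
      · intro h2'
        have : s(v, s) ∈ G.edges := by
          rw [← hEdges]
          exact ⟨s(v, t), h2', twMap_vt hst hv hvs hvt⟩
        exact tri this h2'
    -- the set S₂ \ {s,t} is closed under adjacency
    set T : Set V := S₂ \ {s, t} with hT
    have hclosed : ∀ a ∈ T, ∀ b, G.toSimple.Adj a b → b ∈ T := by
      rintro a ⟨haS, hast⟩ b ⟨hab, habE⟩
      have has : a ≠ s := fun h => hast (by simp [h])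
      have hat : a ≠ t := fun h => hast (by simp [h])
      rcases hdec.edge_cond _ habE with h | h
      · exfalso
        have ha1 : a ∈ S₁ := h a (Sym2.mem_mk_left a b)
        have : a ∈ S₁ ∩ S₂ := ⟨ha1, haS⟩
        rw [hdec.inter_eq] at this
        rcases Sym2.mem_iff.mp this with h' | h'
        · exact has h'
        · exact hat h'
      · have hbS : b ∈ S₂ := h b (Sym2.mem_mk_right a b)
        have hbs : b ≠ s := by
          rintro rfl
          exact (key a haS has hat).1 habE
        have hbt : b ≠ t := by
          rintro rfl
          exact (key a haS has hat).2 habE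
        exact ⟨hbS, by simp [hbs, hbt]⟩
    -- T is nonempty
    have hsub : ({s, t} : Set V) ⊆ S₂ := by
      intro v hv
      have : v ∈ S₁ ∩ S₂ := by
        rw [hdec.inter_eq, hset]; exact hv
      exact this.2
    have hne : ∃ v, v ∈ T := by
      by_contra hcon
      push_neg at hcon
      apply hdec.ne₂
      rw [hset]
      apply Set.Subset.antisymm
      · intro v hv
        by_contra hv'
        exact hcon v ⟨hv, hv'⟩
      · exact hsub
    obtain ⟨v, hvT⟩ := hne
    obtain ⟨w⟩ := hG.connected.preconnected v s
    have : s ∈ T := walk_closed hclosed w hvT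
    exact this.2 (by simp)

end CLTTF
end
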